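/- arXiv:1411.6853 — 11 statements merged into one kernel-verified Lean document; each statement's English description precedes it below -/
import Mathlib

section
/- If nonnegative integers b_1, ..., b_k satisfy 1/2^{b_1} + ... + 1/2^{b_k} ≥ 1, then the tuple (2^{b_1}, ..., 2^{b_k}) is good: there exist sets S_1, ..., S_k ⊆ ℤ with S_1 ∪ ... ∪ S_k = ℤ such that any two distinct elements of S_i differ by at least 2^{b_i}. -/
/-- Subset-sum lemma: if all weights are powers of two dividing `W` and their total
is at least `W`, some subset sums to exactly `W`. -/
lemma lemA {ι : Type*} [DecidableEq ι] :
    ∀ n (s : Finset ι) (w : ι → ℕ) (W : ℕ), s.card ≤ n →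
    (∀ i ∈ s, ∃ e, w i = 2 ^ e) → (∀ i ∈ s, w i ∣ W) →
    W ≤ ∑ i ∈ s, w i → ∃ A ⊆ s, ∑ i ∈ A, w i = W := by
  intro n
  induction n with
  | zero =>
    intro s w W hcard _ _ hle
    have hs : s = ∅ := Finset.card_eq_zero.mp (Nat.le_zero.mp hcard)
    subst hs
    simp only [Finset.sum_empty] at hle
    exact ⟨∅, Finset.Subset.refl _, by simp; omega⟩
  | succ n ih =>
    intro s w W hcard hpow hdvd hle
    rcases Nat.eq_zero_or_pos W with hW | hW
    · exact ⟨∅, Finset.empty_subset _, by simp [hW]⟩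
    have hsne : s.Nonempty := by
      by_contra h
      rw [Finset.not_nonempty_iff_eq_empty] at h
      subst h
      simp only [Finset.sum_empty] at hle
      omega
    obtain ⟨i, his, hmax⟩ := Finset.exists_max_image s w hsne
    obtain ⟨e, he⟩ := hpow i his
    have hwiW : w i ≤ W := Nat.le_of_dvd hW (hdvd i his)
    have hwipos : 0 < w i := by rw [he]; positivity
    -- recurse on s.erase i with target W - w i
    have hcard' : (s.erase i).card ≤ n := by
      have := Finset.card_erase_of_mem his
      have h1 : 1 ≤ s.card := Finset.card_pos.mpr hsne
      omega
    have hpow' : ∀ j ∈ s.erase i, ∃ e, w j = 2 ^ e := fun j hj =>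
      hpow j (Finset.mem_of_mem_erase hj)
    have hdvd' : ∀ j ∈ s.erase i, w j ∣ W - w i := by
      intro j hj
      have hjs := Finset.mem_of_mem_erase hj
      obtain ⟨f, hf⟩ := hpow j hjs
      have hle2 : w j ≤ w i := hmax j hjs
      have hdvdwi : w j ∣ w i := by
        rw [hf, he] at hle2 ⊢
        exact pow_dvd_pow 2 ((Nat.pow_le_pow_iff_right (by norm_num)).mp hle2)
      exact Nat.dvd_sub (hdvd j hjs) hdvdwi
    have hsumerase : ∑ j ∈ s.erase i, w j = (∑ j ∈ s, w j) - w i := by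
      have := Finset.add_sum_erase s w his
      omega
    have hle' : W - w i ≤ ∑ j ∈ s.erase i, w j := by
      rw [hsumerase]; omega
    obtain ⟨A', hA'sub, hA'sum⟩ := ih (s.erase i) w (W - w i) hcard' hpow' hdvd' hle'
    refine ⟨insert i A', ?_, ?_⟩
    · intro j hj
      rcases Finset.mem_insert.mp hj with h | h
      · subst h; exact his
      · exact Finset.mem_of_mem_erase (hA'sub h)
    · have hiA' : i ∉ A' := fun h => (Finset.notMem_erase i s) (hA'sub h)
      rw [Finset.sum_insert hiA', hA'sum]
      omega

/-- Main recursive covering lemma (natural-number form). -/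
lemma lemB {ι : Type*} [DecidableEq ι] :
    ∀ n (s : Finset ι) (b : ι → ℕ) (M : ℕ), s.card ≤ n →
    (∀ i ∈ s, b i ≤ M) → 2 ^ M ≤ ∑ i ∈ s, 2 ^ (M - b i) →
    ∃ S : ι → Set ℤ, (⋃ i ∈ s, S i) = Set.univ ∧
      ∀ i ∈ s, ∀ t₁ ∈ S i, ∀ t₂ ∈ S i, t₁ ≠ t₂ → ((2 ^ (b i) : ℤ) ≤ |t₁ - t₂|) := by
  intro n
  induction n with
  | zero =>
    intro s b M hcard _ hsum
    have hs : s = ∅ := Finset.card_eq_zero.mp (Nat.le_zero.mp hcard)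
    subst hs
    simp only [Finset.sum_empty] at hsum
    exact absurd hsum (not_le.mpr (by positivity))
  | succ n ih =>
    intro s b M hcard hbM hsum
    by_cases h0 : ∃ i₀ ∈ s, b i₀ = 0
    · obtain ⟨i₀, hi₀s, hb0⟩ := h0
      refine ⟨fun i => if i = i₀ then Set.univ else ∅, ?_, ?_⟩
      · rw [Set.eq_univ_iff_forall]
        intro x
        exact Set.mem_biUnion hi₀s (by simp)
      · intro i his t₁ ht₁ t₂ ht₂ hne
        by_cases h : i = i₀
        · subst h
          rw [hb0, pow_zero]
          exact Int.one_le_abs (sub_ne_zero.mpr hne)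
        · simp [h] at ht₁
    · push_neg at h0
      have hb1 : ∀ i ∈ s, 1 ≤ b i := fun i hi => Nat.one_le_iff_ne_zero.mpr (h0 i hi)
      have hsne : s.Nonempty := by
        by_contra h
        rw [Finset.not_nonempty_iff_eq_empty] at h
        subst h
        simp only [Finset.sum_empty] at hsum
        exact absurd hsum (not_le.mpr (by positivity))
      have hM1 : 1 ≤ M := by
        obtain ⟨i, hi⟩ := hsne
        exact le_trans (hb1 i hi) (hbM i hi)
      -- find A ⊆ s with ∑_{A} 2^(M - b i) = 2^(M-1)
      obtain ⟨A, hAsub, hAsum⟩ := lemA s.card s (fun i => 2 ^ (M - b i)) (2 ^ (M - 1))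
        le_rfl (fun i _ => ⟨M - b i, rfl⟩)
        (fun i hi => pow_dvd_pow 2 (by have := hb1 i hi; have := hbM i hi; omega))
        (le_trans (Nat.pow_le_pow_right (by norm_num) (by omega)) hsum)
      have hApos : 0 < ∑ i ∈ A, 2 ^ (M - b i) := by rw [hAsum]; positivity
      have hAne : A.Nonempty := by
        by_contra h
        rw [Finset.not_nonempty_iff_eq_empty] at h
        subst h
        simp at hApos
      have hAsns : A ≠ s := by
        intro h
        subst h
        have : (2 : ℕ) ^ (M - 1) < 2 ^ M := Nat.pow_lt_pow_right (by norm_num) (by omega)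
        omega
      have hAcard : A.card ≤ n := by
        have h1 : A.card < s.card := Finset.card_lt_card (lt_of_le_of_ne hAsub hAsns)
        omega
      have hBcard : (s \ A).card ≤ n := by
        have h1 : (s \ A).card = s.card - A.card := Finset.card_sdiff_of_subset hAsub
        have h2 : 1 ≤ A.card := Finset.card_pos.mpr hAne
        omega
      have hexp : ∀ i ∈ s, (M - 1) - (b i - 1) = M - b i := by
        intro i hi
        have := hb1 i hi; have := hbM i hi; omega
      -- recurse on A
      have hAeq : ∑ i ∈ A, 2 ^ ((M - 1) - (b i - 1)) = ∑ i ∈ A, 2 ^ (M - b i) :=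
        Finset.sum_congr rfl (fun i hi => by rw [hexp i (hAsub hi)])
      have hAsum' : 2 ^ (M - 1) ≤ ∑ i ∈ A, 2 ^ ((M - 1) - (b i - 1)) := by
        rw [hAeq, hAsum]
      obtain ⟨S₁, hS₁cov, hS₁gap⟩ := ih A (fun i => b i - 1) (M - 1) hAcard
        (fun i hi => by show b i - 1 ≤ M - 1; have := hbM i (hAsub hi); omega) hAsum'
      -- recurse on s \ A
      have hsdiffsum : ∑ i ∈ s \ A, 2 ^ (M - b i) + ∑ i ∈ A, 2 ^ (M - b i)
          = ∑ i ∈ s, 2 ^ (M - b i) := Finset.sum_sdiff hAsub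
      have hBeq : ∑ i ∈ s \ A, 2 ^ ((M - 1) - (b i - 1)) = ∑ i ∈ s \ A, 2 ^ (M - b i) :=
        Finset.sum_congr rfl (fun i hi => by rw [hexp i (Finset.mem_sdiff.mp hi).1])
      have hBsum' : 2 ^ (M - 1) ≤ ∑ i ∈ s \ A, 2 ^ ((M - 1) - (b i - 1)) := by
        rw [hBeq]
        have h2M : (2 : ℕ) ^ M = 2 ^ (M - 1) + 2 ^ (M - 1) := by
          have h : (2 : ℕ) ^ M = 2 ^ (M - 1) * 2 := by
            rw [← pow_succ]; congr 1; omega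
          omega
        omega
      obtain ⟨S₂, hS₂cov, hS₂gap⟩ := ih (s \ A) (fun i => b i - 1) (M - 1) hBcard
        (fun i hi => by show b i - 1 ≤ M - 1
                        have := hbM i (Finset.mem_sdiff.mp hi).1; omega) hBsum'
      -- combine: evens from A, odds from s \ A
      refine ⟨fun i => if i ∈ A then (fun x => 2 * x) '' S₁ i else (fun x => 2 * x + 1) '' S₂ i,
        ?_, ?_⟩
      · rw [Set.eq_univ_iff_forall]
        intro z
        rcases Int.even_or_odd z with ⟨x, hx⟩ | ⟨x, hx⟩
        · have hx' : x ∈ ⋃ i ∈ A, S₁ i := hS₁cov ▸ Set.mem_univ x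
          obtain ⟨i, hiA, hxi⟩ := Set.mem_iUnion₂.mp hx'
          refine Set.mem_biUnion (hAsub hiA) ?_
          simp only [hiA, if_pos]
          exact ⟨x, hxi, by show 2 * x = z; omega⟩
        · have hx' : x ∈ ⋃ i ∈ s \ A, S₂ i := hS₂cov ▸ Set.mem_univ x
          obtain ⟨i, hiB, hxi⟩ := Set.mem_iUnion₂.mp hx'
          have hiB' := Finset.mem_sdiff.mp hiB
          refine Set.mem_biUnion hiB'.1 ?_
          simp only [hiB'.2, if_neg, not_false_iff]
          exact ⟨x, hxi, by show 2 * x + 1 = z; omega⟩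
      · intro i his t₁ ht₁ t₂ ht₂ hne
        have hbpow : (2 : ℤ) ^ (b i) = 2 * 2 ^ (b i - 1) := by
          rw [show 2 * (2:ℤ) ^ (b i - 1) = 2 ^ (b i - 1) * 2 by ring, ← pow_succ]
          congr 1; have := hb1 i his; omega
        by_cases hiA : i ∈ A
        · simp only [hiA, if_pos] at ht₁ ht₂
          obtain ⟨x, hx, hxe⟩ := ht₁
          obtain ⟨y, hy, hye⟩ := ht₂
          have hxy : x ≠ y := by intro h; apply hne; rw [← hxe, ← hye, h]
          have hgap' : (2 : ℤ) ^ (b i - 1) ≤ |x - y| := hS₁gap i hiA x hx y hy hxy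
          have habs : |t₁ - t₂| = 2 * |x - y| := by
            rw [← hxe, ← hye]
            rw [show 2 * x - 2 * y = 2 * (x - y) by ring, abs_mul]
            simp
          rw [habs, hbpow]
          omega
        · simp only [hiA, if_neg, not_false_iff] at ht₁ ht₂
          obtain ⟨x, hx, hxe⟩ := ht₁
          obtain ⟨y, hy, hye⟩ := ht₂
          have hxy : x ≠ y := by intro h; apply hne; rw [← hxe, ← hye, h]
          have hiB : i ∈ s \ A := Finset.mem_sdiff.mpr ⟨his, hiA⟩
          have hgap' : (2 : ℤ) ^ (b i - 1) ≤ |x - y| := hS₂gap i hiB x hx y hy hxy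
          have habs : |t₁ - t₂| = 2 * |x - y| := by
            rw [← hxe, ← hye]
            rw [show 2 * x + 1 - (2 * y + 1) = 2 * (x - y) by ring, abs_mul]
            simp
          rw [habs, hbpow]
          omega

/-- if `∑ 1/2^(b i) ≥ 1` then `(2^(b 1), …, 2^(b k))` is good. -/
theorem stmt_1 (k : ℕ) (b : Fin k → ℕ)
    (hsum : (1 : ℝ) ≤ ∑ i, (1 : ℝ) / 2 ^ (b i)) :
    ∃ S : Fin k → Set ℤ, (⋃ i, S i) = Set.univ ∧
      ∀ i, ∀ t₁ ∈ S i, ∀ t₂ ∈ S i, t₁ ≠ t₂ → ((2 ^ (b i) : ℤ) ≤ |t₁ - t₂|) := by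
  set M := Finset.univ.sup b with hM
  have hbM : ∀ i : Fin k, b i ≤ M := fun i => Finset.le_sup (Finset.mem_univ i)
  -- convert to natural-number inequality
  have key : (2 : ℕ) ^ M ≤ ∑ i, 2 ^ (M - b i) := by
    have hreal : (2 : ℝ) ^ M ≤ ∑ i, (2 : ℝ) ^ (M - b i) := by
      calc (2 : ℝ) ^ M = 2 ^ M * 1 := by ring
        _ ≤ 2 ^ M * ∑ i, (1 : ℝ) / 2 ^ (b i) := by
            apply mul_le_mul_of_nonneg_left hsum (by positivity)
        _ = ∑ i, (2 : ℝ) ^ M * (1 / 2 ^ (b i)) := Finset.mul_sum _ _ _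
        _ = ∑ i, (2 : ℝ) ^ (M - b i) := by
            apply Finset.sum_congr rfl
            intro i _
            rw [mul_one_div, div_eq_iff (by positivity), ← pow_add,
              Nat.sub_add_cancel (hbM i)]
    have hcast : ((∑ i, 2 ^ (M - b i) : ℕ) : ℝ) = ∑ i, (2 : ℝ) ^ (M - b i) := by
      push_cast; rfl
    have : ((2 ^ M : ℕ) : ℝ) ≤ ((∑ i, 2 ^ (M - b i) : ℕ) : ℝ) := by
      rw [hcast]; push_cast; exact hreal
    exact_mod_cast this
  obtain ⟨S, hcov, hgap⟩ := lemB k Finset.univ b M (by simp) (fun i _ => hbM i) key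
  refine ⟨S, ?_, fun i => hgap i (Finset.mem_univ i)⟩
  rw [← hcov]
  simp
end

section
/- If positive integers a_1, ..., a_k satisfy 1/a_1 + ... + 1/a_k ≥ 2, then the tuple (a_1, ..., a_k) is good: there exist sets S_1, ..., S_k ⊆ ℤ with union ℤ such that any two distinct elements of S_i differ by at least a_i. -/
/-- Key combinatorial lemma: if `∑ i in s, 2^(E - e i) ≥ 2^E` (with all `e i ≤ E`),
then one can choose residues `r i` so that the classes `r i mod 2^(e i)` cover `ℤ`. -/
lemma cover_aux : ∀ n : ℕ, ∀ s : Finset ℕ, ∀ e : ℕ → ℕ, ∀ E : ℕ,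
    s.card = n → (∀ i ∈ s, e i ≤ E) →
    2 ^ E ≤ ∑ i ∈ s, 2 ^ (E - e i) →
    ∃ r : ℕ → ℤ, ∀ t : ℤ, ∃ i ∈ s, ((2 : ℤ) ^ (e i)) ∣ t - r i := by
  intro n
  induction n using Nat.strong_induction_on with
  | _ n IH =>
    intro s e E hcard hle hsum
    rcases s.eq_empty_or_nonempty with rfl | hne
    · simp only [Finset.sum_empty] at hsum
      have := Nat.two_pow_pos E
      omega
    by_cases h0 : ∃ i ∈ s, e i = 0
    · obtain ⟨i₀, hi₀, he₀⟩ := h0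
      exact ⟨fun _ => 0, fun t => ⟨i₀, hi₀, by simp [he₀]⟩⟩
    push_neg at h0
    set M := s.sup' hne e with hM
    obtain ⟨iM, hiM, hmax⟩ := Finset.exists_mem_eq_sup' hne e
    have hMle : ∀ i ∈ s, e i ≤ M := fun i hi => Finset.le_sup' e hi
    have hM1 : 1 ≤ M := by
      have := h0 iM hiM; omega
    have hME : M ≤ E := by
      have := hle iM hiM; omega
    set F := s.filter (fun i => e i = M) with hF
    have hiMF : iM ∈ F := Finset.mem_filter.mpr ⟨hiM, hmax.symm⟩
    have hn1 : 1 ≤ n := by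
      rw [← hcard]; exact Finset.card_pos.mpr hne
    by_cases hF2 : 1 < F.card
    · -- merge two classes with maximal exponent
      obtain ⟨i, hi, j, hj, hij⟩ := Finset.one_lt_card.mp hF2
      obtain ⟨his, hie⟩ := Finset.mem_filter.mp hi
      obtain ⟨hjs, hje⟩ := Finset.mem_filter.mp hj
      set m := s.sup id + 1 with hm
      have hms : m ∉ s := by
        intro h
        have := Finset.le_sup (f := id) h
        simp only [id] at this; omega
      set s₂ := (s.erase i).erase j with hs₂
      have hjs₂' : j ∈ s.erase i := Finset.mem_erase.mpr ⟨hij.symm, hjs⟩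
      have hms₂ : m ∉ s₂ := fun h => hms (Finset.mem_of_mem_erase (Finset.mem_of_mem_erase h))
      set s' := insert m s₂ with hs'
      set e' := Function.update e m (M - 1) with he'
      have hcard₂ : s₂.card = n - 2 := by
        rw [hs₂, Finset.card_erase_of_mem hjs₂', Finset.card_erase_of_mem his, hcard]
        omega
      have hn2 : 2 ≤ n := by
        have : 1 < s.card := Finset.one_lt_card.mpr ⟨i, his, j, hjs, hij⟩
        omega
      have hcard' : s'.card = n - 1 := by
        rw [hs', Finset.card_insert_of_notMem hms₂, hcard₂]; omega
      have he'eq : ∀ x ∈ s₂, e' x = e x := by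
        intro x hx
        have : x ≠ m := fun h => hms₂ (h ▸ hx)
        simp [he', Function.update_of_ne this]
      have hle' : ∀ x ∈ s', e' x ≤ E := by
        intro x hx
        rcases Finset.mem_insert.mp hx with rfl | hx
        · simp [he', Function.update_self]; omega
        · rw [he'eq x hx]
          exact hle x (Finset.mem_of_mem_erase (Finset.mem_of_mem_erase hx))
      have hsum' : 2 ^ E ≤ ∑ x ∈ s', 2 ^ (E - e' x) := by
        have h1 : ∑ x ∈ s', 2 ^ (E - e' x)
            = 2 ^ (E - (M - 1)) + ∑ x ∈ s₂, 2 ^ (E - e x) := by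
          rw [hs', Finset.sum_insert hms₂]
          congr 1
          · simp [he', Function.update_self]
          · exact Finset.sum_congr rfl fun x hx => by rw [he'eq x hx]
        have h2 : ∑ x ∈ s, 2 ^ (E - e x)
            = 2 ^ (E - M) + (2 ^ (E - M) + ∑ x ∈ s₂, 2 ^ (E - e x)) := by
          rw [← Finset.sum_erase_add s _ his, ← Finset.sum_erase_add (s.erase i) _ hjs₂',
            hie, hje]
          ring
        have h3 : 2 ^ (E - (M - 1)) = 2 ^ (E - M) + 2 ^ (E - M) := by
          have : E - (M - 1) = (E - M) + 1 := by omega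
          rw [this, pow_succ]; ring
        rw [h1, h3]
        omega
      obtain ⟨r', hr'⟩ := IH (n - 1) (by omega) s' e' E hcard' hle' hsum'
      refine ⟨fun x => if x = i then r' m else if x = j then r' m + 2 ^ (M - 1) else r' x,
        fun t => ?_⟩
      obtain ⟨i', hi', hdvd⟩ := hr' t
      rcases Finset.mem_insert.mp hi' with rfl | hi'2
      · -- i' = m : split the class mod 2^(M-1) into the two classes of i and j mod 2^M
        rw [he', Function.update_self] at hdvd
        obtain ⟨c, hc⟩ := hdvd
        have hpow : (2 : ℤ) ^ M = 2 ^ (M - 1) * 2 := by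
          rw [← pow_succ]; congr 1; omega
        rcases Int.even_or_odd c with ⟨d, hd⟩ | ⟨d, hd⟩
        · refine ⟨i, his, ?_⟩
          beta_reduce
          split_ifs with h1
          · refine ⟨d, ?_⟩
            rw [hie, hc, hd, hpow]; ring
          · exact absurd rfl h1
        · refine ⟨j, hjs, ?_⟩
          beta_reduce
          split_ifs with h1 h2
          · exact absurd h1 (Ne.symm hij)
          · refine ⟨d, ?_⟩
            have hstep : t - (r' m + 2 ^ (M - 1)) = 2 ^ (M - 1) * c - 2 ^ (M - 1) := by
              rw [← hc]; ring
            rw [hje, hstep, hd, hpow]; ring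
          · exact absurd rfl h2
      · have hxi' : i' ≠ i := by
          intro h; subst h
          exact (Finset.mem_erase.mp (Finset.mem_of_mem_erase hi'2)).1 rfl
        have hxj : i' ≠ j := by
          intro h; subst h
          exact (Finset.mem_erase.mp hi'2).1 rfl
        refine ⟨i', Finset.mem_of_mem_erase (Finset.mem_of_mem_erase hi'2), ?_⟩
        rw [← he'eq i' hi'2]
        beta_reduce
        rw [if_neg hxi', if_neg hxj]
        exact hdvd
    · -- exactly one class with maximal exponent: drop it
      have hFone : ∀ x ∈ s, e x = M → x = iM := by
        intro x hx hxM
        by_contra hne'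
        exact hF2 (Finset.one_lt_card.mpr
          ⟨x, Finset.mem_filter.mpr ⟨hx, hxM⟩, iM, hiMF, hne'⟩)
      set s' := s.erase iM with hs'
      have hcard' : s'.card = n - 1 := by
        rw [hs', Finset.card_erase_of_mem hiM, hcard]
      have hsmall : ∀ x ∈ s', e x ≤ M - 1 := by
        intro x hx
        obtain ⟨hxne, hxs⟩ := Finset.mem_erase.mp hx
        have h1 := hMle x hxs
        have h2 : e x ≠ M := fun h => hxne (hFone x hxs h)
        omega
      have hdvdT : (2 : ℕ) ^ (E - M + 1) ∣ ∑ x ∈ s', 2 ^ (E - e x) := by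
        refine Finset.dvd_sum fun x hx => pow_dvd_pow 2 ?_
        have := hsmall x hx; omega
      obtain ⟨q, hq⟩ := hdvdT
      have hsplit : ∑ x ∈ s, 2 ^ (E - e x) = 2 ^ (E - M) + ∑ x ∈ s', 2 ^ (E - e x) := by
        rw [hs', ← Finset.sum_erase_add s _ hiM, ← hmax]
        ring
      -- show the remaining sum is still ≥ 2^E
      have hsum' : 2 ^ E ≤ ∑ x ∈ s', 2 ^ (E - e x) := by
        rw [hq]
        rw [hsplit, hq] at hsum
        have hEMM : 2 ^ (E - M) * 2 ^ M = 2 ^ E := by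
          rw [← pow_add]; congr 1; omega
        have hEM1 : 2 ^ (E - M + 1) = 2 ^ (E - M) * 2 := by rw [pow_succ]
        have hMpred : (2 : ℕ) ^ M = 2 * 2 ^ (M - 1) := by
          rw [← pow_succ']; congr 1; omega
        have hApos : 0 < 2 ^ (E - M) := Nat.two_pow_pos _
        have key : 2 ^ M ≤ 1 + 2 * q := by
          have : 2 ^ (E - M) * 2 ^ M ≤ 2 ^ (E - M) * (1 + 2 * q) := by
            rw [hEMM]
            calc 2 ^ E ≤ 2 ^ (E - M) + 2 ^ (E - M + 1) * q := hsum
              _ = 2 ^ (E - M) * (1 + 2 * q) := by rw [hEM1]; ring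
          exact Nat.le_of_mul_le_mul_left this hApos
        have key2 : 2 ^ (M - 1) ≤ q := by omega
        calc 2 ^ E = 2 ^ (E - M) * (2 * 2 ^ (M - 1)) := by rw [← hMpred, hEMM]
          _ ≤ 2 ^ (E - M) * (2 * q) := by
              exact Nat.mul_le_mul_left _ (Nat.mul_le_mul_left _ key2)
          _ = 2 ^ (E - M + 1) * q := by rw [hEM1]; ring
      obtain ⟨r', hr'⟩ := IH (n - 1) (by omega) s' e E hcard'
        (fun x hx => hle x (Finset.mem_of_mem_erase hx)) hsum'
      refine ⟨r', fun t => ?_⟩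
      obtain ⟨i', hi', hdvd⟩ := hr' t
      exact ⟨i', Finset.mem_of_mem_erase hi', hdvd⟩

/-- if `∑ 1/(a i) ≥ 2` then `(a 1, …, a k)` is good. -/
theorem stmt_2 (k : ℕ) (a : Fin k → ℕ) (ha : ∀ i, 0 < a i)
    (hsum : (2 : ℝ) ≤ ∑ i, (1 : ℝ) / a i) :
    ∃ S : Fin k → Set ℤ, (⋃ i, S i) = Set.univ ∧
      ∀ i, ∀ t₁ ∈ S i, ∀ t₂ ∈ S i, t₁ ≠ t₂ → ((a i : ℤ) ≤ |t₁ - t₂|) := by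
  set e : Fin k → ℕ := fun i => Nat.clog 2 (a i) with he
  -- `2^(e i)` is the least power of two ≥ a i, and it is < 2 * a i
  have hpow1 : ∀ i, a i ≤ 2 ^ (e i) := fun i => Nat.le_pow_clog one_lt_two _
  have hpow2 : ∀ i, 2 ^ (e i) ≤ 2 * a i := by
    intro i
    rcases eq_or_lt_of_le (Nat.succ_le_of_lt (ha i)) with h1 | h1
    · have : a i = 1 := h1.symm
      simp [he, this, Nat.clog_one_right]
    · have hlt := Nat.pow_pred_clog_lt_self one_lt_two h1
      have hpos : 0 < Nat.clog 2 (a i) := Nat.clog_pos one_lt_two h1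
      have hsplit : 2 ^ (e i) = 2 * 2 ^ (Nat.clog 2 (a i)).pred := by
        rw [← pow_succ']; congr 1
        simp [he]; omega
      rw [hsplit]; omega
  -- real reciprocal sum of the powers of two is ≥ 1
  have h1 : (1 : ℝ) ≤ ∑ i, ((2 : ℝ) ^ (e i))⁻¹ := by
    have hterm : ∀ i, (1 : ℝ) / a i ≤ 2 * ((2 : ℝ) ^ (e i))⁻¹ := by
      intro i
      have hai : (0 : ℝ) < a i := by exact_mod_cast ha i
      have hp : (0 : ℝ) < 2 ^ (e i) := by positivity
      rw [show (2 : ℝ) * ((2 : ℝ) ^ (e i))⁻¹ = 2 / 2 ^ (e i) by ring,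
        div_le_div_iff₀ hai hp]
      have hc : (2 : ℝ) ^ (e i) ≤ 2 * a i := by exact_mod_cast hpow2 i
      linarith
    have h2 : (2 : ℝ) ≤ ∑ i, 2 * ((2 : ℝ) ^ (e i))⁻¹ :=
      le_trans hsum (Finset.sum_le_sum fun i _ => hterm i)
    rw [← Finset.mul_sum] at h2
    linarith
  set E := Finset.univ.sup e with hE
  have hEle : ∀ i, e i ≤ E := fun i => Finset.le_sup (Finset.mem_univ i)
  -- transfer to a natural-number inequality
  have hnat : 2 ^ E ≤ ∑ i, 2 ^ (E - e i) := by
    have hreal : (2 : ℝ) ^ E ≤ ∑ i, (2 : ℝ) ^ (E - e i) := by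
      have heq : ∀ i : Fin k, (2 : ℝ) ^ (E - e i) = 2 ^ E * ((2 : ℝ) ^ (e i))⁻¹ := by
        intro i
        rw [eq_comm, mul_inv_eq_iff_eq_mul₀ (by positivity), ← pow_add]
        congr 1
        have := hEle i; omega
      calc (2 : ℝ) ^ E = 2 ^ E * 1 := by ring
        _ ≤ 2 ^ E * ∑ i, ((2 : ℝ) ^ (e i))⁻¹ := by
            have : (0 : ℝ) < 2 ^ E := by positivity
            nlinarith
        _ = ∑ i, 2 ^ E * ((2 : ℝ) ^ (e i))⁻¹ := Finset.mul_sum _ _ _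
        _ = ∑ i, (2 : ℝ) ^ (E - e i) := Finset.sum_congr rfl fun i _ => (heq i).symm
    exact_mod_cast hreal
  -- apply the covering lemma with index set `range k`
  set efun : ℕ → ℕ := fun x => if h : x < k then e ⟨x, h⟩ else 0 with hefun
  have hcover := cover_aux k (Finset.range k) efun E (Finset.card_range k)
    (by
      intro x hx
      have hxk : x < k := Finset.mem_range.mp hx
      simp only [hefun, dif_pos hxk]
      exact hEle _)
    (by
      have : ∑ x ∈ Finset.range k, 2 ^ (E - efun x) = ∑ i : Fin k, 2 ^ (E - e i) := by
        rw [← Fin.sum_univ_eq_sum_range (fun x => 2 ^ (E - efun x)) k]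
        refine Finset.sum_congr rfl fun i _ => ?_
        simp [hefun, i.isLt]
      rw [this]; exact hnat)
  obtain ⟨r, hr⟩ := hcover
  refine ⟨fun i => {t : ℤ | ((2 : ℤ) ^ (e i)) ∣ t - r i}, ?_, ?_⟩
  · ext t
    simp only [Set.mem_iUnion, Set.mem_setOf_eq, Set.mem_univ, iff_true]
    obtain ⟨x, hx, hdvd⟩ := hr t
    have hxk : x < k := Finset.mem_range.mp hx
    refine ⟨⟨x, hxk⟩, ?_⟩
    simpa [hefun, dif_pos hxk] using hdvd
  · intro i t₁ ht₁ t₂ ht₂ hne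
    simp only [Set.mem_setOf_eq] at ht₁ ht₂
    have hdvd : ((2 : ℤ) ^ (e i)) ∣ t₁ - t₂ := by
      have := dvd_sub ht₁ ht₂
      simpa using this
    have h1 : (a i : ℤ) ≤ (2 : ℤ) ^ (e i) := by exact_mod_cast hpow1 i
    have h2 : ((2 : ℤ) ^ (e i)) ≤ |t₁ - t₂| :=
      Int.le_of_dvd (abs_pos.mpr (sub_ne_zero.mpr hne)) ((dvd_abs _ _).mpr hdvd)
    exact le_trans h1 h2
end

section
/- For every k ≥ 0, the tuple (2^0+1, 2^1+1, 2^2+1, ..., 2^k+1) = (2, 3, 5, ..., 2^k+1) is bad: there are no sets S_0, ..., S_k ⊆ ℤ with union ℤ such that any two distinct elements of S_i differ by at least 2^i + 1. -/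
/-- the tuple `(2^0+1, 2^1+1, …, 2^k+1)` is bad. -/
theorem stmt_4 (k : ℕ) :
    ¬ ∃ S : Fin (k + 1) → Set ℤ, (⋃ i, S i) = Set.univ ∧
      ∀ i, ∀ t₁ ∈ S i, ∀ t₂ ∈ S i, t₁ ≠ t₂ → ((2 ^ (i : ℕ) + 1 : ℤ) ≤ |t₁ - t₂|) := by
  rintro ⟨S, hcov, hgap⟩
  have key : ∀ j, j ≤ k + 1 → ∀ x : ℤ, ∃ t : ℤ, x ≤ t ∧ t ≤ x + 2 ^ j - 1 ∧
      ∀ i : Fin (k + 1), (i : ℕ) < j → t ∉ S i := by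
    intro j
    induction j with
    | zero =>
      intro _ x
      exact ⟨x, le_refl x, by norm_num, fun i hi => absurd hi (Nat.not_lt_zero _)⟩
    | succ j ih =>
      intro hj x
      obtain ⟨t₁, h1a, h1b, h1c⟩ := ih (Nat.le_of_succ_le hj) x
      obtain ⟨t₂, h2a, h2b, h2c⟩ := ih (Nat.le_of_succ_le hj) (t₁ + 1)
      have hjk : j < k + 1 := hj
      set J : Fin (k + 1) := ⟨j, hjk⟩ with hJ
      have hpow : (2 : ℤ) ^ (j + 1) = 2 ^ j + 2 ^ j := by ring
      have hppos : (0 : ℤ) < 2 ^ j := pow_pos (by norm_num) j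
      have ht1 : t₁ < t₂ := by linarith
      by_cases hT1 : t₁ ∈ S J
      · by_cases hT2 : t₂ ∈ S J
        · exfalso
          have hg := hgap J t₁ hT1 t₂ hT2 (by omega)
          have habs : |t₁ - t₂| = t₂ - t₁ := by
            rw [abs_of_neg (by linarith : t₁ - t₂ < 0)]; ring
          rw [habs] at hg
          have : (J : ℕ) = j := rfl
          rw [this] at hg
          linarith
        · refine ⟨t₂, by linarith, by linarith, fun i hi => ?_⟩
          rcases Nat.lt_succ_iff_lt_or_eq.mp hi with h | h
          · exact h2c i h
          · have : i = J := Fin.ext h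
            rw [this]; exact hT2
      · refine ⟨t₁, h1a, by linarith, fun i hi => ?_⟩
        rcases Nat.lt_succ_iff_lt_or_eq.mp hi with h | h
        · exact h1c i h
        · have : i = J := Fin.ext h
          rw [this]; exact hT1
  obtain ⟨t, -, -, ht⟩ := key (k + 1) (le_refl _) 0
  have : (t : ℤ) ∈ ⋃ i, S i := by rw [hcov]; trivial
  obtain ⟨i, hi⟩ := Set.mem_iUnion.mp this
  exact ht i i.isLt hi
end

section
/- For every k ≥ 0 and every choice of sets S_0, ..., S_k ⊆ ℤ such that any two distinct elements of S_i differ by at least 2^i + 1, there is at least one integer t with 1 ≤ t ≤ 2^{k+1} that belongs to none of the sets S_0, ..., S_k. -/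
lemma aux_window (k : ℕ) (S : ℕ → Set ℤ)
    (hsep : ∀ i, i ≤ k → ∀ t₁ ∈ S i, ∀ t₂ ∈ S i, t₁ ≠ t₂ → ((2 ^ i + 1 : ℤ) ≤ |t₁ - t₂|)) :
    ∀ a : ℤ, ∃ t : ℤ, a + 1 ≤ t ∧ t ≤ a + 2 ^ (k + 1) ∧ ∀ i ≤ k, t ∉ S i := by
  induction k with
  | zero =>
    intro a
    by_cases h : (a + 1) ∈ S 0
    · refine ⟨a + 2, by linarith, by norm_num, ?_⟩
      intro i hi
      interval_cases i
      intro h2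
      have := hsep 0 le_rfl _ h _ h2 (by intro hc; omega)
      simp only [pow_zero] at this
      rw [abs_sub_comm] at this
      have : |(1 : ℤ)| ≥ 2 := by simp at this
      simp at this
    · refine ⟨a + 1, le_rfl, by norm_num, ?_⟩
      intro i hi
      interval_cases i
      exact h
  | succ k ih =>
    intro a
    have hsep' : ∀ i, i ≤ k → ∀ t₁ ∈ S i, ∀ t₂ ∈ S i, t₁ ≠ t₂ →
        ((2 ^ i + 1 : ℤ) ≤ |t₁ - t₂|) := fun i hi => hsep i (by omega)
    obtain ⟨t₁, ht₁l, ht₁r, ht₁⟩ := ih hsep' a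
    obtain ⟨t₂, ht₂l, ht₂r, ht₂⟩ := ih hsep' t₁
    have hne : t₁ ≠ t₂ := by omega
    have hnot : t₁ ∉ S (k + 1) ∨ t₂ ∉ S (k + 1) := by
      by_contra hc
      push_neg at hc
      have := hsep (k + 1) le_rfl _ hc.1 _ hc.2 hne
      have habs : |t₁ - t₂| = t₂ - t₁ := by
        rw [abs_sub_comm]; exact abs_of_nonneg (by omega)
      rw [habs] at this
      have h2 : (2 : ℤ) ^ (k + 1) ≥ 1 := one_le_pow₀ (by norm_num)
      omega
    rcases hnot with h | h
    · refine ⟨t₁, ht₁l, ?_, ?_⟩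
      · have h2 : (2 : ℤ) ^ (k + 1) ≤ 2 ^ (k + 2) := by
          apply pow_le_pow_right₀ <;> omega
        omega
      · intro i hi
        rcases Nat.lt_or_ge i (k + 1) with hlt | hge
        · exact ht₁ i (by omega)
        · have : i = k + 1 := by omega
          subst this; exact h
    · refine ⟨t₂, by omega, ?_, ?_⟩
      · have : t₂ ≤ a + 2 ^ (k + 1) + 2 ^ (k + 1) := by omega
        have h2 : (2 : ℤ) ^ (k + 1) + 2 ^ (k + 1) = 2 ^ (k + 2) := by ring
        omega
      · intro i hi
        rcases Nat.lt_or_ge i (k + 1) with hlt | hge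
        · exact ht₂ i (by omega)
        · have : i = k + 1 := by omega
          subst this; exact h

/-- for agents with revisit intervals `2^i + 1` (`0 ≤ i ≤ k`),
some integer `t` with `1 ≤ t ≤ 2^(k+1)` is visited by no agent. -/
theorem stmt_5 (k : ℕ) (S : Fin (k + 1) → Set ℤ)
    (hsep : ∀ i, ∀ t₁ ∈ S i, ∀ t₂ ∈ S i, t₁ ≠ t₂ → ((2 ^ (i : ℕ) + 1 : ℤ) ≤ |t₁ - t₂|)) :
    ∃ t : ℤ, 1 ≤ t ∧ t ≤ 2 ^ (k + 1) ∧ ∀ i, t ∉ S i := by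
  set S' : ℕ → Set ℤ := fun i => if h : i < k + 1 then S ⟨i, h⟩ else ∅ with hS'
  have hsep' : ∀ i, i ≤ k → ∀ t₁ ∈ S' i, ∀ t₂ ∈ S' i, t₁ ≠ t₂ →
      ((2 ^ i + 1 : ℤ) ≤ |t₁ - t₂|) := by
    intro i hi t₁ h₁ t₂ h₂ hne
    simp only [hS', dif_pos (by omega : i < k + 1)] at h₁ h₂
    exact hsep ⟨i, by omega⟩ t₁ h₁ t₂ h₂ hne
  obtain ⟨t, htl, htr, ht⟩ := aux_window k S' hsep' 0
  refine ⟨t, by omega, by omega, fun i => ?_⟩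
  have := ht i (Nat.lt_succ_iff.mp i.isLt)
  simpa only [hS', dif_pos i.isLt] using this
end

section
/- Let a_1, ..., a_k be positive reals and T > 0. Agents with minimum revisit intervals a_1, ..., a_k can patrol a point with idle time T (i.e., there exist sets S_1, ..., S_k ⊆ ℝ such that distinct elements of S_i differ by at least a_i, and every half-open interval [t, t+T) with t ∈ ℝ contains an element of some S_i) if and only if the integer tuple (⌈a_1/T⌉, ..., ⌈a_k/T⌉) is good. -/
/-- agents with real minimum revisit intervals `a i` can patrol a point
with idle time `T` iff the integer tuple `(⌈a i / T⌉)` is good. -/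
theorem stmt_7 (k : ℕ) (a : Fin k → ℝ) (ha : ∀ i, 0 < a i) (T : ℝ) (hT : 0 < T) :
    (∃ S : Fin k → Set ℝ,
      (∀ i, ∀ t₁ ∈ S i, ∀ t₂ ∈ S i, t₁ ≠ t₂ → a i ≤ |t₁ - t₂|) ∧
      (∀ t : ℝ, ∃ i, ∃ t' ∈ Set.Ico t (t + T), t' ∈ S i)) ↔
    (∃ S : Fin k → Set ℤ, (⋃ i, S i) = Set.univ ∧
      ∀ i, ∀ t₁ ∈ S i, ∀ t₂ ∈ S i, t₁ ≠ t₂ → (⌈a i / T⌉ ≤ |t₁ - t₂|)) := by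
  constructor
  · rintro ⟨S, hsep, hcov⟩
    -- coverage restated for the union of all visit sets
    have hcovV : ∀ t : ℝ, ∃ v ∈ ⋃ i, S i, t ≤ v ∧ v < t + T := by
      intro t
      obtain ⟨i, t', ht', hmem⟩ := hcov t
      exact ⟨t', Set.mem_iUnion.mpr ⟨i, hmem⟩, ht'.1, ht'.2⟩
    -- local finiteness of the set of visits
    have hfin : ∀ A B : ℝ, ((⋃ i, S i) ∩ Set.Icc A B).Finite := by
      intro A B
      rw [Set.iUnion_inter]
      apply Set.finite_iUnion
      intro i
      have hai := ha i
      have key : ∀ t₁ ∈ S i ∩ Set.Icc A B, ∀ t₂ ∈ S i ∩ Set.Icc A B,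
          t₁ < t₂ → ⌊t₁ / a i⌋ < ⌊t₂ / a i⌋ := by
        rintro t₁ ⟨h₁, -⟩ t₂ ⟨h₂, -⟩ hlt
        have hd := hsep i t₁ h₁ t₂ h₂ (ne_of_lt hlt)
        rw [abs_sub_comm, abs_of_pos (sub_pos.mpr hlt)] at hd
        have h1 : t₁ / a i + 1 ≤ t₂ / a i := by
          have h2 : (1 : ℝ) ≤ (t₂ - t₁) / a i := (one_le_div hai).mpr hd
          rw [sub_div] at h2
          linarith
        have h3 : ⌊t₁ / a i + 1⌋ ≤ ⌊t₂ / a i⌋ := Int.floor_le_floor h1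
        rw [Int.floor_add_one] at h3
        omega
      apply Set.Finite.of_finite_image (f := fun t => ⌊t / a i⌋)
      · apply Set.Finite.subset (Set.finite_Icc ⌊A / a i⌋ ⌊B / a i⌋)
        rintro z ⟨t, ⟨htS, htA, htB⟩, rfl⟩
        exact ⟨Int.floor_le_floor (by gcongr), Int.floor_le_floor (by gcongr)⟩
      · intro t₁ h₁ t₂ h₂ hfe
        by_contra hne
        rcases lt_or_gt_of_ne hne with h | h
        · exact absurd hfe (ne_of_lt (key t₁ h₁ t₂ h₂ h))
        · exact absurd hfe.symm (ne_of_lt (key t₂ h₂ t₁ h₁ h))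
    -- there is always a next visit within distance T to the right
    have hnext : ∀ x : ℝ, ∃ v ∈ ⋃ i, S i, x < v ∧ v ≤ x + T := by
      intro x
      have hGfin : (((⋃ i, S i) ∩ Set.Ioc x (x + 2*T))).Finite := by
        apply (hfin x (x + 2*T)).subset
        rintro v ⟨hv, h1, h2⟩
        exact ⟨hv, le_of_lt h1, h2⟩
      have hGne : (((⋃ i, S i) ∩ Set.Ioc x (x + 2*T))).Nonempty := by
        obtain ⟨v, hv, h1, h2⟩ := hcovV (x + T)
        exact ⟨v, hv, by linarith, by linarith⟩
      obtain ⟨v₀, hv₀, hmin⟩ := Set.exists_min_image _ id hGfin hGne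
      refine ⟨v₀, hv₀.1, hv₀.2.1, ?_⟩
      by_contra hlt
      push_neg at hlt
      obtain ⟨w, hwV, hw1, hw2⟩ := hcovV ((x + (v₀ - T))/2)
      have hw_in : w ∈ ((⋃ i, S i) ∩ Set.Ioc x (x + 2*T)) := by
        refine ⟨hwV, by linarith, ?_⟩
        have : v₀ ≤ x + 2*T := hv₀.2.2
        linarith
      have := hmin w hw_in
      simp only [id] at this
      linarith
    -- there is always a previous visit within distance T to the left
    have hprev : ∀ x : ℝ, ∃ v ∈ ⋃ i, S i, x - T ≤ v ∧ v < x := by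
      intro x
      obtain ⟨v, hv, h1, h2⟩ := hcovV (x - T)
      exact ⟨v, hv, h1, by linarith⟩
    choose nxt hnxtV hnxt1 hnxt2 using hnext
    choose prv hprvV hprv1 hprv2 using hprev
    obtain ⟨x₀, hx₀V, -, -⟩ := hcovV 0
    -- the bi-infinite sequence of selected visits
    set u : ℤ → ℝ := fun n => nxt^[n.toNat] (prv^[(-n).toNat] x₀) with hu
    have hstep : ∀ n : ℤ, u n < u (n + 1) ∧ u (n + 1) ≤ u n + T := by
      intro n
      rcases le_or_gt 0 n with hn | hn
      · have h2 : u (n + 1) = nxt (u n) := by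
          simp only [hu]
          rw [show (-(n+1)).toNat = 0 from by omega, show (-n).toNat = 0 from by omega,
            show (n+1).toNat = n.toNat + 1 from by omega, Function.iterate_succ_apply']
        rw [h2]
        exact ⟨hnxt1 _, hnxt2 _⟩
      · have h1 : u n = prv (u (n + 1)) := by
          simp only [hu]
          rw [show n.toNat = 0 from by omega, show (n+1).toNat = 0 from by omega,
            show (-n).toNat = (-(n+1)).toNat + 1 from by omega, Function.iterate_succ_apply']
          simp
        rw [h1]
        have ha1 := hprv1 (u (n + 1))
        have ha2 := hprv2 (u (n + 1))
        exact ⟨ha2, by linarith⟩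
    have hmem : ∀ n : ℤ, u n ∈ ⋃ i, S i := by
      intro n
      rcases lt_trichotomy n 0 with hn | hn | hn
      · have h1 : u n = prv (prv^[(-n).toNat - 1] x₀) := by
          simp only [hu]
          rw [show n.toNat = 0 from by omega,
            show (-n).toNat = ((-n).toNat - 1) + 1 from by omega, Function.iterate_succ_apply']
          simp
        rw [h1]; exact hprvV _
      · subst hn
        have h1 : u 0 = x₀ := by simp [hu]
        rw [h1]; exact hx₀V
      · have h1 : u n = nxt (nxt^[n.toNat - 1] (prv^[(-n).toNat] x₀)) := by
          simp only [hu]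
          conv_lhs => rw [show n.toNat = (n.toNat - 1) + 1 from by omega]
          rw [Function.iterate_succ_apply']
        rw [h1]; exact hnxtV _
    have hgap : ∀ (p : ℕ) (n : ℤ), u (n + p) ≤ u n + p * T := by
      intro p
      induction p with
      | zero => intro n; simp
      | succ p ih =>
        intro n
        have h1 := (hstep (n + p)).2
        have h2 := ih n
        rw [show n + ((p + 1 : ℕ) : ℤ) = (n + p) + 1 from by push_cast; ring]
        push_cast
        linarith
    have hmono : ∀ (p : ℕ), 0 < p → ∀ n : ℤ, u n < u (n + p) := by
      intro p
      induction p with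
      | zero => omega
      | succ p ih =>
        intro _ n
        have h1 := (hstep (n + p)).1
        rw [show n + ((p + 1 : ℕ) : ℤ) = (n + p) + 1 from by push_cast; ring]
        rcases Nat.eq_zero_or_pos p with h0 | hp
        · subst h0; simpa using h1
        · exact lt_trans (ih hp n) h1
    have hag : ∀ n : ℤ, ∃ i, u n ∈ S i := fun n => Set.mem_iUnion.mp (hmem n)
    choose ag hagS using hag
    refine ⟨fun i => {n | ag n = i}, ?_, ?_⟩
    · ext n
      simp only [Set.mem_iUnion, Set.mem_setOf_eq, Set.mem_univ, iff_true]
      exact ⟨ag n, rfl⟩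
    · intro i n hn m hm hne
      simp only [Set.mem_setOf_eq] at hn hm
      have key : ∀ n m : ℤ, n < m → ag n = i → ag m = i → ⌈a i / T⌉ ≤ m - n := by
        intro n m hlt h1 h2
        have hpm : (((m - n).toNat : ℤ)) = m - n := by omega
        have h3 : u n < u m := by
          have := hmono (m - n).toNat (by omega) n
          rwa [hpm, show n + (m - n) = m from by ring] at this
        have h4 : u m ≤ u n + ((m - n).toNat : ℝ) * T := by
          have := hgap (m - n).toNat n
          rwa [hpm, show n + (m - n) = m from by ring] at this
        have h5 := hsep i (u n) (h1 ▸ hagS n) (u m) (h2 ▸ hagS m) (ne_of_lt h3)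
        rw [abs_sub_comm, abs_of_pos (sub_pos.mpr h3)] at h5
        rw [Int.ceil_le]
        have hcast : ((m - n : ℤ) : ℝ) = ((m - n).toNat : ℝ) := by
          exact_mod_cast hpm.symm
        rw [hcast, div_le_iff₀ hT]
        linarith
      rcases hne.lt_or_gt with h | h
      · have := key n m h hn hm
        rwa [abs_sub_comm, abs_of_pos (sub_pos.mpr h)]
      · have := key m n h hm hn
        rwa [abs_of_pos (sub_pos.mpr h)]
  · rintro ⟨B, hBu, hBsep⟩
    refine ⟨fun i => (fun n : ℤ => (n : ℝ) * T) '' B i, ?_, ?_⟩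
    · rintro i t₁ ⟨n, hn, rfl⟩ t₂ ⟨m, hm, rfl⟩ hne
      have hnm : n ≠ m := by rintro rfl; exact hne rfl
      have h1 := hBsep i n hn m hm hnm
      have h2 : ((⌈a i / T⌉ : ℤ) : ℝ) ≤ |((n : ℝ) - m)| := by
        have : ((|n - m| : ℤ) : ℝ) = |((n : ℝ) - m)| := by push_cast; rfl
        rw [← this]
        exact_mod_cast h1
      have h3 : a i / T ≤ ((⌈a i / T⌉ : ℤ) : ℝ) := Int.le_ceil _
      have h4 : (n : ℝ) * T - (m : ℝ) * T = ((n : ℝ) - m) * T := by ring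
      rw [h4, abs_mul, abs_of_pos hT]
      have h5 : a i / T ≤ |((n : ℝ) - m)| := le_trans h3 h2
      have h6 : (a i / T) * T ≤ |((n : ℝ) - m)| * T :=
        mul_le_mul_of_nonneg_right h5 hT.le
      rwa [div_mul_cancel₀ _ (ne_of_gt hT)] at h6
    · intro t
      have hn : (⌈t / T⌉ : ℤ) ∈ ⋃ i, B i := by rw [hBu]; exact Set.mem_univ _
      obtain ⟨i, hi⟩ := Set.mem_iUnion.mp hn
      refine ⟨i, (⌈t / T⌉ : ℝ) * T, ⟨?_, ?_⟩, ⟨_, hi, rfl⟩⟩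
      · have h1 : t / T ≤ (⌈t / T⌉ : ℝ) := Int.le_ceil _
        have h2 : (t / T) * T ≤ (⌈t / T⌉ : ℝ) * T := mul_le_mul_of_nonneg_right h1 hT.le
        rwa [div_mul_cancel₀ _ (ne_of_gt hT)] at h2
      · have h1 : (⌈t / T⌉ : ℝ) < t / T + 1 := Int.ceil_lt_add_one _
        have h2 : (⌈t / T⌉ : ℝ) * T < (t / T + 1) * T := mul_lt_mul_of_pos_right h1 hT
        have h3 : (t / T + 1) * T = t + T := by field_simp
        linarith
end

section
/- Suppose positive integers m_1, ..., m_k satisfy 1/m_1 + ... + 1/m_k = 1. Then there exist integers r_1, ..., r_k such that every integer x satisfies x ≡ r_i (mod m_i) for exactly one index i (a disjoint covering system), if and only if (m_1, ..., m_k) is good. -/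
/-- Packing bound: a set of integers in `[a, b]` with pairwise distances at
least `m` has at most `(b - a) / m + 1` elements. -/
lemma stmt8_cardA (m : ℤ) (hm : 0 < m) (a b : ℤ) (hab : a ≤ b) (F : Finset ℤ)
    (hF : ∀ t ∈ F, a ≤ t ∧ t ≤ b)
    (hsep : ∀ t₁ ∈ F, ∀ t₂ ∈ F, t₁ ≠ t₂ → m ≤ |t₁ - t₂|) :
    (F.card : ℤ) ≤ (b - a) / m + 1 := by
  have key : ∀ t₁ ∈ F, ∀ t₂ ∈ F, t₁ < t₂ → (t₁ - a) / m < (t₂ - a) / m := by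
    intro t₁ h₁ t₂ h₂ hlt
    have hsep' := hsep t₁ h₁ t₂ h₂ hlt.ne
    have habs : |t₁ - t₂| = t₂ - t₁ := by rw [abs_sub_comm]; exact abs_of_nonneg (by linarith)
    have h1 : t₁ - a + 1 * m ≤ t₂ - a := by rw [habs] at hsep'; linarith
    have h2 := Int.ediv_le_ediv hm h1
    rw [Int.add_mul_ediv_right _ _ hm.ne'] at h2
    omega
  have hinj : Set.InjOn (fun t => (t - a) / m) F := by
    intro t₁ h₁ t₂ h₂ heq
    by_contra hne
    rcases lt_or_gt_of_ne hne with h | h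
    · exact absurd heq (key t₁ h₁ t₂ h₂ h).ne
    · exact absurd heq.symm (key t₂ h₂ t₁ h₁ h).ne
  have hcard : F.card ≤ (Finset.Icc (0:ℤ) ((b - a) / m)).card := by
    apply Finset.card_le_card_of_injOn _ _ hinj
    intro t ht
    simp only [Finset.mem_coe, Finset.mem_Icc]
    exact ⟨Int.ediv_nonneg (by linarith [(hF t ht).1]) hm.le,
      Int.ediv_le_ediv hm (by linarith [(hF t ht).2])⟩
  have hIcc : (Finset.Icc (0:ℤ) ((b - a) / m)).card = ((b-a)/m + 1).toNat := by
    rw [Int.card_Icc]; ring_nf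
  have hnn : 0 ≤ (b - a) / m := Int.ediv_nonneg (by linarith) hm.le
  omega

/-- A set with gaps at least `m` has at most `n` elements in a window of
length `n * m`. -/
lemma stmt8_window (S : Set ℤ) [DecidablePred (· ∈ S)] (m n : ℕ) (hm : 0 < m)
    (hgap : ∀ t₁ ∈ S, ∀ t₂ ∈ S, t₁ ≠ t₂ → (m:ℤ) ≤ |t₁ - t₂|) (a : ℤ) :
    ((Finset.Ico a (a + (n*m : ℕ))).filter (· ∈ S)).card ≤ n := by
  rcases Nat.eq_zero_or_pos n with hn | hn
  · simp [hn]
  have hmZ : (0:ℤ) < m := by exact_mod_cast hm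
  have hdiv : ((n:ℤ)*m - 1 - 0) / m + 1 = n := by
    have h1 : (n:ℤ)*m - 1 - 0 = (m - 1) + (n-1)*m := by ring
    rw [h1, Int.add_mul_ediv_right _ _ hmZ.ne',
      Int.ediv_eq_zero_of_lt (by omega) (by omega)]
    ring
  have hA := stmt8_cardA m hmZ a (a + (n*m:ℕ) - 1) (by push_cast; nlinarith)
    ((Finset.Ico a (a + (n*m : ℕ))).filter (· ∈ S))
    (by intro t ht; simp only [Finset.mem_filter, Finset.mem_Ico] at ht; omega)
    (by intro t₁ h₁ t₂ h₂ hne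
        simp only [Finset.mem_filter] at h₁ h₂
        exact hgap t₁ h₁.2 t₂ h₂.2 hne)
  have h2 : (a + (n*m:ℕ) - 1 - a) / (m:ℤ) + 1 = n := by
    rw [show a + (n*m:ℕ) - 1 - a = (n:ℤ)*m - 1 - 0 by push_cast; ring]; exact hdiv
  omega

/-- when `∑ 1/(m i) = 1`, a disjoint covering system with moduli
`m i` exists iff `(m 1, …, m k)` is good. -/
theorem stmt_8 (k : ℕ) (m : Fin k → ℕ) (hm : ∀ i, 0 < m i)
    (hsum : ∑ i, (1 : ℝ) / m i = 1) :
    (∃ r : Fin k → ℤ, ∀ x : ℤ, ∃! i, (m i : ℤ) ∣ x - r i) ↔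
    (∃ S : Fin k → Set ℤ, (⋃ i, S i) = Set.univ ∧
      ∀ i, ∀ t₁ ∈ S i, ∀ t₂ ∈ S i, t₁ ≠ t₂ → ((m i : ℤ) ≤ |t₁ - t₂|)) := by
  constructor
  · -- easy direction: residue classes form good sets
    rintro ⟨r, hr⟩
    refine ⟨fun i => {x | (m i : ℤ) ∣ x - r i}, ?_, ?_⟩
    · ext x
      simp only [Set.mem_iUnion, Set.mem_setOf_eq, Set.mem_univ, iff_true]
      obtain ⟨i, hi, -⟩ := hr x
      exact ⟨i, hi⟩
    · intro i t₁ h₁ t₂ h₂ hne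
      have hdvd : (m i : ℤ) ∣ t₁ - t₂ := by
        have := dvd_sub h₁ h₂
        simpa using this
      have hpos : 0 < |t₁ - t₂| := abs_pos.mpr (sub_ne_zero.mpr hne)
      exact Int.le_of_dvd hpos ((dvd_abs _ _).mpr hdvd)
  · -- hard direction
    rintro ⟨S, hcover, hgap⟩
    classical
    set L : ℕ := ∏ i, m i with hLdef
    have hmL : ∀ i, m i ∣ L := fun i => Finset.dvd_prod_of_mem m (Finset.mem_univ i)
    have hL : 0 < L := Finset.prod_pos (fun i _ => hm i)
    set n : Fin k → ℕ := fun i => L / m i with hndef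
    have hnm : ∀ i, n i * m i = L := fun i => Nat.div_mul_cancel (hmL i)
    have hn : ∀ i, 0 < n i := fun i => Nat.div_pos (Nat.le_of_dvd hL (hmL i)) (hm i)
    have hsumL : ∑ i, n i = L := by
      have h1 : ((∑ i, n i : ℕ) : ℝ) = ((L : ℕ) : ℝ) := by
        push_cast
        have h2 : ∀ i, ((n i : ℕ) : ℝ) = (L : ℝ) * (1 / m i) := by
          intro i
          have hni := hnm i
          have hmi : ((m i : ℕ) : ℝ) ≠ 0 := Nat.cast_ne_zero.mpr (hm i).ne'
          field_simp
          exact_mod_cast hni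
        rw [Finset.sum_congr rfl (fun i _ => h2 i), ← Finset.mul_sum, hsum, mul_one]
      exact_mod_cast h1
    set F : ℤ → Fin k → Finset ℤ :=
      fun a i => (Finset.Ico a (a + (L:ℤ))).filter (· ∈ S i) with hFdef
    have hmemF : ∀ (a : ℤ) i (t : ℤ), t ∈ F a i ↔ (a ≤ t ∧ t < a + (L:ℤ)) ∧ t ∈ S i := by
      intro a i t
      rw [hFdef]
      simp [Finset.mem_filter, Finset.mem_Ico]
    have hFle : ∀ a i, (F a i).card ≤ n i := by
      intro a i
      have hw := stmt8_window (S i) (m i) (n i) (hm i) (hgap i) a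
      rw [hnm i] at hw
      exact hw
    have hmemU : ∀ x : ℤ, ∃ i, x ∈ S i := by
      intro x
      have : x ∈ ⋃ i, S i := hcover ▸ Set.mem_univ x
      exact Set.mem_iUnion.mp this
    have hsubset : ∀ a, Finset.Ico a (a + (L:ℤ)) ⊆ Finset.univ.biUnion (F a) := by
      intro a x hx
      obtain ⟨i, hi⟩ := hmemU x
      exact Finset.mem_biUnion.mpr ⟨i, Finset.mem_univ i, Finset.mem_filter.mpr ⟨hx, hi⟩⟩
    have hsum_card : ∀ a, ∑ i, (F a i).card = L := by
      intro a
      have h1 : L ≤ ∑ i, (F a i).card := by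
        calc L = (Finset.Ico a (a + (L:ℤ))).card := by rw [Int.card_Ico]; omega
          _ ≤ (Finset.univ.biUnion (F a)).card := Finset.card_le_card (hsubset a)
          _ ≤ ∑ i, (F a i).card := Finset.card_biUnion_le
      have h2 : ∑ i, (F a i).card ≤ ∑ i, n i := Finset.sum_le_sum (fun i _ => hFle a i)
      omega
    have hFcard : ∀ a i, (F a i).card = n i := by
      intro a i
      refine (Finset.sum_eq_sum_iff_of_le (fun j _ => hFle a j)).mp ?_ i (Finset.mem_univ i)
      rw [hsum_card a, hsumL]
    -- periodicity mod L
    have hper : ∀ i (a : ℤ), a ∈ S i ↔ a + (L:ℤ) ∈ S i := by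
      intro i a
      have key : ∀ b : ℤ, ∀ s : Finset ℤ, b ∉ s →
          ((insert b s).filter (· ∈ S i)).card
            = (if b ∈ S i then 1 else 0) + (s.filter (· ∈ S i)).card := by
        intro b s hb
        rw [Finset.filter_insert]
        split
        · rw [Finset.card_insert_of_notMem (fun h => hb (Finset.mem_of_mem_filter b h))]; omega
        · omega
      have hwin1 : Finset.Ico a (a+(L:ℤ)) = insert a (Finset.Ico (a+1) (a+(L:ℤ))) := by
        ext t; simp only [Finset.mem_Ico, Finset.mem_insert]; omega
      have hwin2 : Finset.Ico (a+1) (a+1+(L:ℤ))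
          = insert (a+(L:ℤ)) (Finset.Ico (a+1) (a+(L:ℤ))) := by
        ext t; simp only [Finset.mem_Ico, Finset.mem_insert]; omega
      have h1 := hFcard a i
      have h2 := hFcard (a+1) i
      rw [hFdef] at h1 h2
      simp only at h1 h2
      rw [hwin1, key a _ (by simp [Finset.mem_Ico])] at h1
      rw [hwin2, key (a+(L:ℤ)) _ (by simp [Finset.mem_Ico])] at h2
      by_cases ha : a ∈ S i <;> by_cases hb : a + (L:ℤ) ∈ S i <;>
        simp [ha, hb] at h1 h2 <;> first | tauto | omega
    -- gaps are exactly m i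
    have hstep : ∀ i (x : ℤ), x ∈ S i → x + (m i : ℤ) ∈ S i := by
      intro i x hx
      have hmZ : (0:ℤ) < m i := by exact_mod_cast hm i
      have hLnm : ((n i : ℤ)) * (m i : ℤ) = (L : ℤ) := by exact_mod_cast hnm i
      set G : Finset ℤ := F (x+1) i with hGdef
      have hGmem : ∀ t, t ∈ G ↔ (x + 1 ≤ t ∧ t ≤ x + (L:ℤ)) ∧ t ∈ S i := by
        intro t
        rw [hGdef, hmemF]
        constructor
        · rintro ⟨⟨h1, h2⟩, h3⟩; exact ⟨⟨h1, by omega⟩, h3⟩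
        · rintro ⟨⟨h1, h2⟩, h3⟩; exact ⟨⟨h1, by omega⟩, h3⟩
      have hxL : x + (L:ℤ) ∈ G := (hGmem _).mpr ⟨⟨by omega, le_refl _⟩, (hper i x).mp hx⟩
      have hGne : G.Nonempty := ⟨_, hxL⟩
      set u : ℤ := G.min' hGne with hudef
      have huG : u ∈ G := G.min'_mem hGne
      have huS : u ∈ S i := ((hGmem u).mp huG).2
      have hub : x + 1 ≤ u ∧ u ≤ x + (L:ℤ) := ((hGmem u).mp huG).1
      have hum : x + (m i : ℤ) ≤ u := by
        have hg := hgap i u huS x hx (by omega)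
        rw [abs_of_pos (by omega)] at hg
        omega
      have hcard := stmt8_cardA (m i) hmZ u (x + (L:ℤ)) hub.2 G
        (fun t ht => ⟨G.min'_le t ht, ((hGmem t).mp ht).1.2⟩)
        (fun t₁ h₁ t₂ h₂ hne => hgap i t₁ ((hGmem t₁).mp h₁).2 t₂ ((hGmem t₂).mp h₂).2 hne)
      rw [hFcard] at hcard
      have h2 : ((n i : ℤ) - 1) ≤ (x + (L:ℤ) - u) / (m i : ℤ) := by omega
      have h3 : ((n i : ℤ) - 1) * (m i : ℤ) ≤ x + (L:ℤ) - u :=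
        (Int.le_ediv_iff_mul_le hmZ).mp h2
      have hu : u = x + (m i : ℤ) := by nlinarith
      rw [← hu]; exact huS
    -- iterate periodicity and steps
    have hperZ : ∀ i (x : ℤ) (s : ℤ), x ∈ S i → x + s*(L:ℤ) ∈ S i := by
      intro i x s
      induction s using Int.induction_on with
      | zero => simpa
      | succ s ih =>
          intro hx
          have h := (hper i (x + (s:ℤ)*(L:ℤ))).mp (ih hx)
          rw [show x + (s:ℤ)*(L:ℤ) + (L:ℤ) = x + ((s:ℤ)+1)*(L:ℤ) from by ring] at h
          exact h
      | pred s ih =>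
          intro hx
          have h := (hper i (x + (-(s:ℤ)-1)*(L:ℤ))).mpr (by
            rw [show x + (-(s:ℤ)-1)*(L:ℤ) + (L:ℤ) = x + (-(s:ℤ))*(L:ℤ) from by ring]
            exact ih hx)
          exact h
    have hstepN : ∀ i (x : ℤ) (j : ℕ), x ∈ S i → x + (j:ℤ)*(m i : ℤ) ∈ S i := by
      intro i x j hx
      induction j with
      | zero => simpa
      | succ j ih =>
          have h := hstep i _ ih
          rw [show x + (j:ℤ)*(m i:ℤ) + (m i:ℤ) = x + ((j:ℤ)+1)*(m i:ℤ) from by ring] at h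
          push_cast
          exact h
    have hFne : ∀ i, (F 0 i).Nonempty := by
      intro i
      rw [← Finset.card_pos, hFcard]; exact hn i
    set r : Fin k → ℤ := fun i => (F 0 i).min' (hFne i) with hrdef
    have hrS : ∀ i, r i ∈ S i ∧ 0 ≤ r i ∧ r i < (L:ℤ) := by
      intro i
      have h := (hmemF 0 i (r i)).mp ((F 0 i).min'_mem (hFne i))
      exact ⟨h.2, by omega, by omega⟩
    have hwinAP : ∀ i, F (r i) i
        = (Finset.range (n i)).image (fun (j : ℕ) => r i + (j:ℤ)*(m i:ℤ)) := by
      intro i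
      have hmZ : (0:ℤ) < m i := by exact_mod_cast hm i
      have hLnm : ((n i : ℤ)) * (m i : ℤ) = (L : ℤ) := by exact_mod_cast hnm i
      refine (Finset.eq_of_subset_of_card_le ?_ ?_).symm
      · intro t ht
        simp only [Finset.mem_image, Finset.mem_range] at ht
        obtain ⟨j, hj, rfl⟩ := ht
        rw [hmemF]
        have h0 : (0:ℤ) ≤ (j:ℤ)*(m i:ℤ) := by positivity
        have hj' : (j:ℤ) + 1 ≤ (n i : ℤ) := by exact_mod_cast hj
        refine ⟨⟨by linarith, ?_⟩, hstepN i _ j (hrS i).1⟩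
        nlinarith
      · have hinj : Function.Injective (fun (j:ℕ) => r i + (j:ℤ)*(m i:ℤ)) := by
          intro a b hab
          simp only at hab
          have h : (a:ℤ)*(m i:ℤ) = (b:ℤ)*(m i:ℤ) := by linarith
          have hab2 := mul_right_cancel₀ hmZ.ne' h
          exact_mod_cast hab2
        rw [hFcard, Finset.card_image_of_injective _ hinj, Finset.card_range]
    have hchar : ∀ i (x : ℤ), x ∈ S i ↔ (m i : ℤ) ∣ x - r i := by
      intro i x
      have hmZ : (0:ℤ) < m i := by exact_mod_cast hm i
      have hLnm : ((n i : ℤ)) * (m i : ℤ) = (L : ℤ) := by exact_mod_cast hnm i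
      have hLZ : (0:ℤ) < L := by exact_mod_cast hL
      constructor
      · intro hx
        set q : ℤ := (x - r i) / (L:ℤ) with hq
        have hmod : 0 ≤ x - r i - q*(L:ℤ) ∧ x - r i - q*(L:ℤ) < (L:ℤ) := by
          have h1 : x - r i - q*(L:ℤ) = (x - r i) % (L:ℤ) := by
            rw [Int.emod_def]; ring
          rw [h1]
          exact ⟨Int.emod_nonneg _ hLZ.ne', Int.emod_lt_of_pos _ hLZ⟩
        have hx' : x - q*(L:ℤ) ∈ S i := by
          have h := hperZ i x (-q) hx
          rwa [neg_mul, ← sub_eq_add_neg] at h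
        have hx'F : x - q*(L:ℤ) ∈ F (r i) i := by
          rw [hmemF]
          exact ⟨⟨by omega, by omega⟩, hx'⟩
        rw [hwinAP i] at hx'F
        simp only [Finset.mem_image, Finset.mem_range] at hx'F
        obtain ⟨j, _, hj⟩ := hx'F
        refine ⟨(j:ℤ) + q*(n i:ℤ), ?_⟩
        have h1 : x - r i = (j:ℤ)*(m i:ℤ) + q*(L:ℤ) := by linarith
        rw [h1, ← hLnm]; ring
      · rintro ⟨c, hc⟩
        have h1 : (c.natAbs : ℤ) = |c| := Int.natCast_natAbs c
        have hj : (0:ℤ) ≤ c + (c.natAbs : ℤ) * (n i : ℤ) := by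
          have h2 : (1:ℤ) ≤ n i := by exact_mod_cast hn i
          nlinarith [abs_nonneg c, neg_abs_le c]
        have hmem : r i + (((c + (c.natAbs : ℤ) * (n i : ℤ)).toNat : ℤ))*(m i:ℤ) ∈ S i :=
          hstepN i _ _ (hrS i).1
        have heq : r i + (((c + (c.natAbs : ℤ) * (n i : ℤ)).toNat : ℤ))*(m i:ℤ)
            = x + (c.natAbs : ℤ)*(L:ℤ) := by
          rw [Int.toNat_of_nonneg hj, ← hLnm,
            show x = r i + (m i:ℤ)*c from by linarith]
          ring
        rw [heq] at hmem
        have h := hperZ i _ (-(c.natAbs:ℤ)) hmem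
        rwa [show x + (c.natAbs:ℤ)*(L:ℤ) + -(c.natAbs:ℤ)*(L:ℤ) = x from by ring] at h
    have hdisj : ∀ i j (x : ℤ), x ∈ S i → x ∈ S j → i = j := by
      intro i j x hxi hxj
      by_contra hne
      have hkey : ∑ t ∈ Finset.Ico x (x + (L:ℤ)),
          (Finset.univ.filter (fun i' => t ∈ S i')).card = L := by
        calc ∑ t ∈ Finset.Ico x (x + (L:ℤ)), (Finset.univ.filter (fun i' => t ∈ S i')).card
            = ∑ t ∈ Finset.Ico x (x + (L:ℤ)), ∑ i' : Fin k, (if t ∈ S i' then 1 else 0) := by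
              refine Finset.sum_congr rfl (fun t _ => ?_)
              exact Finset.card_filter _ _
          _ = ∑ i' : Fin k, ∑ t ∈ Finset.Ico x (x + (L:ℤ)), (if t ∈ S i' then 1 else 0) :=
              Finset.sum_comm
          _ = ∑ i' : Fin k, (F x i').card := by
              refine Finset.sum_congr rfl (fun i' _ => ?_)
              rw [hFdef]
              exact (Finset.card_filter _ _).symm
          _ = ∑ i' : Fin k, n i' := Finset.sum_congr rfl (fun i' _ => hFcard x i')
          _ = L := hsumL
      have hlt : (L:ℕ) < ∑ t ∈ Finset.Ico x (x + (L:ℤ)),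
          (Finset.univ.filter (fun i' => t ∈ S i')).card := by
        have hcW : (Finset.Ico x (x + (L:ℤ))).card = L := by rw [Int.card_Ico]; omega
        calc (L:ℕ) = ∑ t ∈ Finset.Ico x (x + (L:ℤ)), 1 := by
              rw [Finset.sum_const, smul_eq_mul, hcW, mul_one]
          _ < _ := by
              apply Finset.sum_lt_sum
              · intro t _
                obtain ⟨i', hi'⟩ := hmemU t
                rw [Nat.succ_le_iff, Finset.card_pos]
                exact ⟨i', Finset.mem_filter.mpr ⟨Finset.mem_univ i', hi'⟩⟩
              · refine ⟨x, by simp [Finset.mem_Ico]; omega, ?_⟩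
                exact Finset.one_lt_card.mpr
                  ⟨i, Finset.mem_filter.mpr ⟨Finset.mem_univ i, hxi⟩,
                   j, Finset.mem_filter.mpr ⟨Finset.mem_univ j, hxj⟩, hne⟩
      omega
    refine ⟨r, fun x => ?_⟩
    obtain ⟨i, hi⟩ := hmemU x
    refine ⟨i, (hchar i x).mp hi, fun j hj => ?_⟩
    exact hdisj j i x ((hchar j x).mpr hj) hi
end

section
/- If positive integers m_1, ..., m_k with 1/m_1 + ... + 1/m_k = 1 admit sets S_1, ..., S_k ⊆ ℤ covering ℤ with distinct elements of each S_i differing by at least m_i, then in fact each S_i may be taken to be (indeed, any such periodic schedule is) a full residue class: there exist integers r_1, ..., r_k such that the sets {t ∈ ℤ : t ≡ r_i (mod m_i)} partition ℤ. -/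
open Finset

lemma blk_sum (P : ℤ → Prop) [DecidablePred P] (mm : ℤ) (hmm : 0 ≤ mm) (a : ℤ) (q : ℕ) :
    ((Finset.Ico a (a + q * mm)).filter P).card
      = ∑ j ∈ Finset.range q, ((Finset.Ico (a + j * mm) (a + j * mm + mm)).filter P).card := by
  induction q with
  | zero => simp
  | succ q ih =>
    have h1 : a ≤ a + q * mm := by nlinarith [Int.natCast_nonneg q]
    have h2 : a + q * mm ≤ a + (q + 1 : ℕ) * mm := by push_cast; nlinarith
    have hsplit : Finset.Ico a (a + q * mm) ∪ Finset.Ico (a + q * mm) (a + (q+1:ℕ) * mm)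
        = Finset.Ico a (a + (q+1:ℕ) * mm) := Finset.Ico_union_Ico_eq_Ico h1 h2
    have hend : a + (q+1:ℕ) * mm = a + q * mm + mm := by push_cast; ring
    rw [← hsplit, Finset.filter_union, Finset.card_union_of_disjoint
      (Finset.disjoint_filter_filter (Finset.Ico_disjoint_Ico_consecutive a _ _)),
      ih, Finset.sum_range_succ, hend]

/-- if `∑ 1/(m i) = 1` and there is a good schedule for `(m i)`,
then there are residues `r i` such that the residue classes `r i (mod m i)`
partition `ℤ` (every integer is in exactly one class). -/
theorem stmt_9 (k : ℕ) (m : Fin k → ℕ) (hm : ∀ i, 0 < m i)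
    (hsum : ∑ i, (1 : ℝ) / m i = 1)
    (hgood : ∃ S : Fin k → Set ℤ, (⋃ i, S i) = Set.univ ∧
      ∀ i, ∀ t₁ ∈ S i, ∀ t₂ ∈ S i, t₁ ≠ t₂ → ((m i : ℤ) ≤ |t₁ - t₂|)) :
    ∃ r : Fin k → ℤ, ∀ x : ℤ, ∃! i, (m i : ℤ) ∣ x - r i := by
  classical
  obtain ⟨S, hcov, hgap⟩ := hgood
  set L : ℕ := ∏ i, m i with hLdef
  have hmdvd : ∀ i, m i ∣ L := fun i => Finset.dvd_prod_of_mem _ (mem_univ i)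
  have hLpos : 0 < L := Finset.prod_pos (fun i _ => hm i)
  -- ∑ L / m i = L  (natural number division, exact)
  have hdivsum : ∑ i, L / m i = L := by
    have : ((∑ i, L / m i : ℕ) : ℝ) = (L : ℝ) := by
      push_cast
      rw [Finset.sum_congr rfl (fun i _ => Nat.cast_div (hmdvd i)
        (by exact_mod_cast (hm i).ne' : (m i : ℝ) ≠ 0))]
      calc ∑ i, (L : ℝ) / m i = (L : ℝ) * ∑ i, (1:ℝ) / m i := by
            rw [Finset.mul_sum]; exact Finset.sum_congr rfl (fun i _ => by ring)
        _ = L := by rw [hsum, mul_one]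
    exact_mod_cast this
  -- each window of length m i contains at most one element of S i
  have hwin_le : ∀ i (a : ℤ), ((Finset.Ico a (a + (m i : ℤ))).filter (· ∈ S i)).card ≤ 1 := by
    intro i a
    refine Finset.card_le_one.mpr ?_
    intro x hx y hy
    simp only [Finset.mem_filter, Finset.mem_Ico] at hx hy
    by_contra hne
    have h := hgap i x hx.2 y hy.2 hne
    have : |x - y| < (m i : ℤ) := abs_sub_lt_iff.mpr ⟨by omega, by omega⟩
    omega
  -- count of S i in a window of length L
  have hcL : ∀ i (a : ℤ), ((Finset.Ico a (a + (L : ℤ))).filter (· ∈ S i)).card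
      = ∑ j ∈ Finset.range (L / m i), ((Finset.Ico (a + j * (m i : ℤ))
          (a + j * (m i : ℤ) + (m i : ℤ))).filter (· ∈ S i)).card := by
    intro i a
    have hLm : (L : ℤ) = ((L / m i : ℕ) : ℤ) * (m i : ℤ) := by
      have := Nat.div_mul_cancel (hmdvd i)
      exact_mod_cast this.symm
    rw [hLm]
    exact blk_sum _ _ (by positivity) a (L / m i)
  have hcL_le : ∀ i (a : ℤ), ((Finset.Ico a (a + (L : ℤ))).filter (· ∈ S i)).card ≤ L / m i := by
    intro i a
    rw [hcL i a]
    calc ∑ j ∈ Finset.range (L / m i), ((Finset.Ico (a + j * (m i:ℤ)) (a + j * (m i:ℤ) + (m i:ℤ))).filter (· ∈ S i)).card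
        ≤ ∑ _j ∈ Finset.range (L / m i), 1 := Finset.sum_le_sum (fun j _ => hwin_le i _)
      _ = L / m i := by simp
  -- covering lower bound: double counting
  have hdouble : ∀ a : ℤ, ∑ i, ((Finset.Ico a (a + (L:ℤ))).filter (· ∈ S i)).card
      = ∑ x ∈ Finset.Ico a (a + (L:ℤ)), (Finset.univ.filter (fun i => x ∈ S i)).card := by
    intro a
    simp only [Finset.card_filter]
    rw [Finset.sum_comm]
  have hpt_ge : ∀ x : ℤ, 1 ≤ (Finset.univ.filter (fun i : Fin k => x ∈ S i)).card := by
    intro x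
    have : x ∈ ⋃ i, S i := by rw [hcov]; trivial
    obtain ⟨i, hi⟩ := Set.mem_iUnion.mp this
    exact Finset.card_pos.mpr ⟨i, Finset.mem_filter.mpr ⟨Finset.mem_univ i, hi⟩⟩
  have hcard_Ico : ∀ a : ℤ, (Finset.Ico a (a + (L:ℤ))).card = L := by
    intro a; rw [Int.card_Ico]; simp
  -- total equality
  have htot : ∀ a : ℤ, ∑ i, ((Finset.Ico a (a + (L:ℤ))).filter (· ∈ S i)).card = L := by
    intro a
    have hge : (L : ℕ) ≤ ∑ i, ((Finset.Ico a (a + (L:ℤ))).filter (· ∈ S i)).card := by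
      rw [hdouble a]
      calc (L:ℕ) = ∑ _x ∈ Finset.Ico a (a + (L:ℤ)), 1 := by rw [Finset.sum_const, smul_eq_mul, mul_one, hcard_Ico]
        _ ≤ _ := Finset.sum_le_sum (fun x _ => hpt_ge x)
    have hle : ∑ i, ((Finset.Ico a (a + (L:ℤ))).filter (· ∈ S i)).card ≤ L :=
      le_of_le_of_eq (Finset.sum_le_sum (fun i _ => hcL_le i a)) hdivsum
    omega
  -- every point lies in exactly one S i
  have hpt_eq : ∀ x : ℤ, (Finset.univ.filter (fun i : Fin k => x ∈ S i)).card = 1 := by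
    intro x
    have hxmem : x ∈ Finset.Ico x (x + (L:ℤ)) := by
      simp only [Finset.mem_Ico]
      constructor
      · exact le_refl x
      · have : (0:ℤ) < L := by exact_mod_cast hLpos
        omega
    have hsum_eq : ∑ x' ∈ Finset.Ico x (x + (L:ℤ)), (1:ℕ)
        = ∑ x' ∈ Finset.Ico x (x + (L:ℤ)), (Finset.univ.filter (fun i : Fin k => x' ∈ S i)).card := by
      rw [← hdouble x, htot x, Finset.sum_const, smul_eq_mul, mul_one, hcard_Ico]
    have := (Finset.sum_eq_sum_iff_of_le (fun x' _ => hpt_ge x')).mp hsum_eq x hxmem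
    omega
  -- each i-count in length-L window is exactly L / m i
  have hcL_eq : ∀ i (a : ℤ), ((Finset.Ico a (a + (L:ℤ))).filter (· ∈ S i)).card = L / m i := by
    intro i a
    have hsum_eq : ∑ j, ((Finset.Ico a (a + (L:ℤ))).filter (· ∈ S j)).card = ∑ j, L / m j := by
      rw [htot a, hdivsum]
    exact (Finset.sum_eq_sum_iff_of_le (fun j _ => hcL_le j a)).mp hsum_eq i (Finset.mem_univ i)
  -- every window of length m i contains exactly one element of S i
  have hwin_eq : ∀ i (a : ℤ), ((Finset.Ico a (a + (m i : ℤ))).filter (· ∈ S i)).card = 1 := by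
    intro i a
    have hblocks : ∑ j ∈ Finset.range (L / m i), ((Finset.Ico (a + j * (m i : ℤ))
        (a + j * (m i : ℤ) + (m i : ℤ))).filter (· ∈ S i)).card = L / m i := by
      rw [← hcL i a, hcL_eq i a]
    have hsum_eq : ∑ j ∈ Finset.range (L / m i), ((Finset.Ico (a + j * (m i : ℤ))
        (a + j * (m i : ℤ) + (m i : ℤ))).filter (· ∈ S i)).card
        = ∑ _j ∈ Finset.range (L / m i), 1 := by
      rw [hblocks]; simp
    have h0mem : 0 ∈ Finset.range (L / m i) :=
      Finset.mem_range.mpr (Nat.div_pos (Nat.le_of_dvd hLpos (hmdvd i)) (hm i))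
    have := (Finset.sum_eq_sum_iff_of_le (fun j _ => hwin_le i _)).mp hsum_eq 0 h0mem
    simpa using this
  -- existence and uniqueness inside each window
  have hex : ∀ i (a : ℤ), ∃ x, x ∈ S i ∧ a ≤ x ∧ x < a + (m i : ℤ) := by
    intro i a
    have : 0 < ((Finset.Ico a (a + (m i : ℤ))).filter (· ∈ S i)).card := by
      rw [hwin_eq i a]; norm_num
    obtain ⟨x, hx⟩ := Finset.card_pos.mp this
    simp only [Finset.mem_filter, Finset.mem_Ico] at hx
    exact ⟨x, hx.2, hx.1.1, hx.1.2⟩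
  have huniq : ∀ i (a x y : ℤ), x ∈ S i → y ∈ S i → a ≤ x → x < a + (m i:ℤ) →
      a ≤ y → y < a + (m i:ℤ) → x = y := by
    intro i a x y hx hy h1 h2 h3 h4
    exact Finset.card_le_one.mp (le_of_eq (hwin_eq i a))
      x (Finset.mem_filter.mpr ⟨Finset.mem_Ico.mpr ⟨h1, h2⟩, hx⟩)
      y (Finset.mem_filter.mpr ⟨Finset.mem_Ico.mpr ⟨h3, h4⟩, hy⟩)
  -- stepping lemmas
  have step_up : ∀ i (x : ℤ), x ∈ S i → x + (m i:ℤ) ∈ S i := by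
    intro i x hx
    obtain ⟨y, hyS, hy1, hy2⟩ := hex i (x + 1)
    have hne : x ≠ y := by omega
    have hgxy := hgap i x hx y hyS hne
    have hym : y = x + (m i:ℤ) := by
      rcases abs_cases (x - y) with ⟨h, _⟩ | ⟨h, _⟩ <;> omega
    rwa [← hym]
  have step_down : ∀ i (x : ℤ), x ∈ S i → x - (m i:ℤ) ∈ S i := by
    intro i x hx
    obtain ⟨y, hyS, hy1, hy2⟩ := hex i (x - (m i:ℤ))
    have hmpos : (0:ℤ) < m i := by exact_mod_cast hm i
    have hne : x ≠ y := by omega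
    have hgxy := hgap i x hx y hyS hne
    have hym : y = x - (m i:ℤ) := by
      rcases abs_cases (x - y) with ⟨h, _⟩ | ⟨h, _⟩ <;> omega
    rwa [← hym]
  -- full residue class contained in S i
  have class_mem : ∀ i (x : ℤ), x ∈ S i → ∀ n : ℤ, x + n * (m i:ℤ) ∈ S i := by
    intro i x hx n
    induction n using Int.induction_on with
    | zero => simpa using hx
    | succ n ih =>
      have heq : x + ((n:ℤ) + 1) * (m i:ℤ) = (x + n * (m i:ℤ)) + (m i:ℤ) := by ring
      rw [heq]; exact step_up i _ ih
    | pred n ih =>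
      have heq : x + (-(n:ℤ) - 1) * (m i:ℤ) = (x + (-(n:ℤ)) * (m i:ℤ)) - (m i:ℤ) := by ring
      rw [heq]; exact step_down i _ ih
  -- define the residues
  set r : Fin k → ℤ := fun i => (hex i 0).choose with hrdef
  have hr : ∀ i, r i ∈ S i := fun i => ((hex i 0).choose_spec).1
  -- membership characterization
  have char : ∀ i (x : ℤ), x ∈ S i ↔ (m i:ℤ) ∣ x - r i := by
    intro i x
    constructor
    · intro hx
      have hmpos : (0:ℤ) < m i := by exact_mod_cast hm i
      set y := x + (r i - x) % (m i:ℤ) with hy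
      have h0 : 0 ≤ (r i - x) % (m i:ℤ) := Int.emod_nonneg _ (ne_of_gt hmpos)
      have h1 : (r i - x) % (m i:ℤ) < (m i:ℤ) := Int.emod_lt_of_pos _ hmpos
      have hdvd_y : (m i:ℤ) ∣ y - r i := by
        refine ⟨-((r i - x) / (m i:ℤ)), ?_⟩
        rw [hy, Int.emod_def]; ring
      have hyS : y ∈ S i := by
        obtain ⟨q, hq⟩ := hdvd_y
        have : y = r i + q * (m i:ℤ) := by linear_combination hq
        rw [this]; exact class_mem i _ (hr i) q
      have hxy : x = y := huniq i x x y hx hyS (le_refl x) (by omega) (by omega) (by omega)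
      have hz : (r i - x) % (m i:ℤ) = 0 := by omega
      have := Int.dvd_of_emod_eq_zero hz
      rw [show x - r i = -(r i - x) by ring]
      exact dvd_neg.mpr this
    · intro ⟨q, hq⟩
      have : x = r i + q * (m i:ℤ) := by linear_combination hq
      rw [this]; exact class_mem i _ (hr i) q
  -- conclude
  refine ⟨r, fun x => ?_⟩
  obtain ⟨i0, hi0⟩ := Finset.card_eq_one.mp (hpt_eq x)
  have hi0mem : x ∈ S i0 := by
    have : i0 ∈ Finset.univ.filter (fun i : Fin k => x ∈ S i) := by
      rw [hi0]; exact Finset.mem_singleton_self i0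
    exact (Finset.mem_filter.mp this).2
  refine ⟨i0, (char i0 x).mp hi0mem, fun j hj => ?_⟩
  have : j ∈ Finset.univ.filter (fun i : Fin k => x ∈ S i) :=
    Finset.mem_filter.mpr ⟨Finset.mem_univ j, (char j x).mpr hj⟩
  rw [hi0] at this
  exact Finset.mem_singleton.mp this
end

section
/- Point patrolling admits a polynomial-ratio-2 bound: let a_1, ..., a_k be positive reals, let x be the infimum of idle times T achievable by agents with minimum revisit intervals a_1, ..., a_k patrolling a point, and let y be the unique positive real with y/a_1 + ... + y/a_k = 1. Then y ≤ x and the idle time 2y is achievable. -/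
noncomputable def pw (e : ℕ) : ℝ := ((2:ℝ)^e)⁻¹

lemma pw_pos (e : ℕ) : 0 < pw e := by unfold pw; positivity

lemma prefix_lemma : ∀ (l : List ℕ), l.Pairwise (· ≤ ·) →
    ∀ (t : ℝ) (n0 : ℕ), t = n0 * pw (l.headD 0) → 0 < t → t ≤ (l.map pw).sum →
    ∃ p q, l = p ++ q ∧ (p.map pw).sum = t := by
  intro l
  induction l with
  | nil =>
    intro _ t n0 _ htpos hle
    simp at hle; linarith
  | cons e l' ih =>
    intro hsort t n0 ht htpos hle
    rw [List.pairwise_cons] at hsort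
    obtain ⟨hhead, hsort'⟩ := hsort
    have hn0 : 1 ≤ n0 := by
      rcases Nat.eq_zero_or_pos n0 with h | h
      · subst h; simp at ht; linarith
      · exact h
    simp only [List.headD_cons] at ht
    by_cases hcase : t ≤ pw e
    · -- t = pw e
      have : pw e ≤ t := by
        rw [ht]
        calc pw e = 1 * pw e := by ring
        _ ≤ (n0:ℝ) * pw e := by
            apply mul_le_mul_of_nonneg_right _ (pw_pos e).le
            exact_mod_cast hn0
      have heq : t = pw e := le_antisymm hcase this
      exact ⟨[e], l', rfl, by simpa using heq.symm⟩
    · push_neg at hcase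
      -- recurse on l'
      have hle' : t - pw e ≤ (l'.map pw).sum := by
        simp only [List.map_cons, List.sum_cons] at hle; linarith
      have htpos' : 0 < t - pw e := by linarith
      cases l' with
      | nil => simp at hle'; linarith
      | cons e2 l'' =>
        have he2 : e ≤ e2 := hhead e2 (by simp)
        have hmul : t - pw e = ((n0 - 1) * 2^(e2 - e) : ℕ) * pw ((e2 :: l'').headD 0) := by
          simp only [List.headD_cons]
          push_cast [Nat.cast_sub hn0]
          rw [ht]
          have h2 : (2:ℝ)^(e2-e) * pw e2 = pw e := by
            unfold pw
            rw [← Nat.sub_add_cancel he2, pow_add]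
            field_simp
            rw [Nat.add_sub_cancel]
          calc (n0:ℝ) * pw e - pw e = ((n0:ℝ) - 1) * ((2:ℝ)^(e2-e) * pw e2) := by rw [h2]; ring
          _ = ((n0:ℝ) - 1) * (2:ℝ)^(e2-e) * pw e2 := by ring
        obtain ⟨p', q', hpq, hsum'⟩ := ih hsort' (t - pw e) _ hmul htpos' hle'
        exact ⟨e :: p', q', by rw [hpq, List.cons_append], by simp [hsum']⟩

lemma cover_lemma : ∀ (N : ℕ) (l : List ℕ), l.length ≤ N → l.Pairwise (· ≤ ·) →
    1 ≤ (l.map pw).sum →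
    ∃ c : List (ℕ × ℤ), c.map Prod.fst = l ∧
      ∀ m : ℤ, ∃ er ∈ c, ((2:ℤ)^er.1) ∣ (m - er.2) := by
  intro N
  induction N with
  | zero =>
    intro l hlen _ hsum
    have : l = [] := List.eq_nil_of_length_eq_zero (Nat.le_zero.mp hlen)
    subst this
    simp at hsum; linarith
  | succ N ih =>
    intro l hlen hsort hsum
    cases l with
    | nil => simp at hsum; linarith
    | cons e l1 =>
      rcases Nat.eq_zero_or_pos e with he0 | he1
      · -- head zero: trivial cover
        subst he0
        refine ⟨(0, 0) :: l1.map (fun f => (f, 0)), by simp [Function.comp_def], ?_⟩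
        intro m
        exact ⟨(0,0), by simp⟩
      · -- all elements ≥ 1
        rw [List.pairwise_cons] at hsort
        obtain ⟨hhead, hsort1⟩ := hsort
        have hall : ∀ f ∈ e :: l1, 1 ≤ f := by
          intro f hf
          rcases List.mem_cons.1 hf with h | h
          · omega
          · exact le_trans he1 (hhead f h)
        obtain ⟨e', rfl⟩ : ∃ e', e = e' + 1 := ⟨e - 1, by omega⟩
        have hhalf : (1/2 : ℝ) = (2^(e' + 1 - 1) : ℕ) * pw (((e' + 1) :: l1).headD 0) := by
          simp only [List.headD_cons, Nat.add_sub_cancel]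
          unfold pw
          push_cast
          rw [pow_succ]
          have h2 : (0:ℝ) < 2^e' := by positivity
          field_simp
        obtain ⟨p, q, hpq, hpsum⟩ := prefix_lemma ((e' + 1) :: l1) (by rw [List.pairwise_cons]; exact ⟨hhead, hsort1⟩)
          (1/2) (2^(e' + 1 -1)) hhalf (by norm_num) (by linarith)
        have hqsum : (q.map pw).sum = (((e' + 1)::l1).map pw).sum - 1/2 := by
          rw [hpq] at *
          simp only [List.map_append, List.sum_append] at *
          linarith
        have hp1 : ∀ f ∈ p, 1 ≤ f := fun f hf => hall f (by rw [hpq]; exact List.mem_append_left _ hf)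
        have hq1 : ∀ f ∈ q, 1 ≤ f := fun f hf => hall f (by rw [hpq]; exact List.mem_append_right _ hf)
        have hpne : p ≠ [] := by rintro rfl; simp at hpsum
        have hqne : q ≠ [] := by
          rintro rfl
          simp only [List.map_nil, List.sum_nil] at hqsum
          linarith
        have hlenpq : p.length + q.length = ((e' + 1)::l1).length := by rw [hpq]; simp
        have hplen : p.length ≤ N := by
          have h1 := List.length_pos_iff.2 hqne
          simp only [List.length_cons] at hlenpq hlen
          omega
        have hqlen : q.length ≤ N := by
          have h1 := List.length_pos_iff.2 hpne
          simp only [List.length_cons] at hlenpq hlen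
          omega
        -- decremented lists
        have hmapsum : ∀ (r : List ℕ), (∀ f ∈ r, 1 ≤ f) →
            ((r.map (· - 1)).map pw).sum = 2 * (r.map pw).sum := by
          intro r hr
          rw [List.map_map, ← List.sum_map_mul_left]
          congr 1
          apply List.map_congr_left
          intro f hf
          have h1 : 1 ≤ f := hr f hf
          simp only [Function.comp_apply]
          unfold pw
          rw [← Nat.sub_add_cancel h1, pow_add]
          field_simp
          rw [Nat.add_sub_cancel]
        have hpsort : (p.map (· - 1)).Pairwise (· ≤ ·) := by
          have : p.Pairwise (· ≤ ·) := by
            have : (p ++ q).Pairwise (· ≤ ·) := by rw [← hpq, List.pairwise_cons]; exact ⟨hhead, hsort1⟩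
            exact (List.pairwise_append.1 this).1
          exact List.Pairwise.map _ (fun _ _ hab => Nat.sub_le_sub_right hab 1) this
        have hqsort : (q.map (· - 1)).Pairwise (· ≤ ·) := by
          have : q.Pairwise (· ≤ ·) := by
            have : (p ++ q).Pairwise (· ≤ ·) := by rw [← hpq, List.pairwise_cons]; exact ⟨hhead, hsort1⟩
            exact (List.pairwise_append.1 this).2.1
          exact List.Pairwise.map _ (fun _ _ hab => Nat.sub_le_sub_right hab 1) this
        obtain ⟨cp, hcp, hcovp⟩ := ih (p.map (· - 1)) (by simpa using hplen) hpsort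
          (by rw [hmapsum p hp1, hpsum]; norm_num)
        obtain ⟨cq, hcq, hcovq⟩ := ih (q.map (· - 1)) (by simpa using hqlen) hqsort
          (by rw [hmapsum q hq1, hqsum]; linarith)
        refine ⟨cp.map (fun er => (er.1 + 1, 2*er.2)) ++ cq.map (fun er => (er.1 + 1, 2*er.2 + 1)),
          ?_, ?_⟩
        · rw [List.map_append, List.map_map, List.map_map, hpq]
          congr 1
          · have : (Prod.fst ∘ fun er : ℕ × ℤ => (er.1 + 1, 2*er.2)) = (fun x => x + 1) ∘ Prod.fst := rfl
            rw [this, ← List.map_map, hcp, List.map_map]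
            calc p.map ((fun x => x + 1) ∘ (· - 1)) = p.map id := by
                  apply List.map_congr_left
                  intro f hf
                  have := hp1 f hf
                  simp only [Function.comp_apply, id]
                  omega
            _ = p := List.map_id p
          · have : (Prod.fst ∘ fun er : ℕ × ℤ => (er.1 + 1, 2*er.2 + 1)) = (fun x => x + 1) ∘ Prod.fst := rfl
            rw [this, ← List.map_map, hcq, List.map_map]
            calc q.map ((fun x => x + 1) ∘ (· - 1)) = q.map id := by
                  apply List.map_congr_left
                  intro f hf
                  have := hq1 f hf
                  simp only [Function.comp_apply, id]
                  omega
            _ = q := List.map_id q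
        · intro m
          rcases Int.even_or_odd m with ⟨m', hm⟩ | ⟨m', hm⟩
          · obtain ⟨er, herm, hdvd⟩ := hcovp m'
            refine ⟨(er.1 + 1, 2*er.2), List.mem_append_left _ (List.mem_map_of_mem herm), ?_⟩
            have : m - 2*er.2 = 2 * (m' - er.2) := by omega
            rw [this, pow_succ, mul_comm ((2:ℤ)^er.1) 2]
            exact mul_dvd_mul_left 2 hdvd
          · obtain ⟨er, herm, hdvd⟩ := hcovq m'
            refine ⟨(er.1 + 1, 2*er.2 + 1), List.mem_append_right _ (List.mem_map_of_mem herm), ?_⟩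
            have : m - (2*er.2 + 1) = 2 * (m' - er.2) := by omega
            rw [this, pow_succ, mul_comm ((2:ℤ)^er.1) 2]
            exact mul_dvd_mul_left 2 hdvd

lemma fin_cover (k : ℕ) (E : Fin k → ℕ) (hsum : 1 ≤ ∑ i, pw (E i)) :
    ∃ R : Fin k → ℤ, ∀ m : ℤ, ∃ i, ((2:ℤ)^(E i)) ∣ (m - R i) := by
  classical
  set σ := Tuple.sort E with hσ
  set g : Fin k → ℕ := E ∘ σ with hg
  have hmono : Monotone g := Tuple.monotone_sort E
  set L : List ℕ := List.ofFn g with hL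
  have hLlen : L.length = k := List.length_ofFn
  have hLsort : L.Pairwise (· ≤ ·) := hmono.sortedLE_ofFn.pairwise
  have hLsum : 1 ≤ (L.map pw).sum := by
    rw [hL, List.map_ofFn, List.sum_ofFn]
    have : ∑ i : Fin k, (pw ∘ g) i = ∑ i : Fin k, pw (E i) := by
      rw [hg]
      exact Equiv.sum_comp σ (fun i => pw (E i))
    rw [this]
    exact hsum
  obtain ⟨c, hcfst, hcov⟩ := cover_lemma L.length L le_rfl hLsort hLsum
  have hclen : c.length = k := by
    rw [← hLlen, ← hcfst, List.length_map]
  refine ⟨fun i => (c.getD ((σ.symm i : Fin k) : ℕ) (0, 0)).2, ?_⟩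
  intro m
  obtain ⟨er, hermem, hdvd⟩ := hcov m
  obtain ⟨j, hj, hje⟩ := List.mem_iff_getElem.1 hermem
  have hjk : j < k := by omega
  refine ⟨σ ⟨j, hjk⟩, ?_⟩
  have h1 : ((σ.symm (σ ⟨j, hjk⟩) : Fin k) : ℕ) = j := by
    simp
  have h2 : (c.getD ((σ.symm (σ ⟨j, hjk⟩) : Fin k) : ℕ) (0, 0)) = er := by
    rw [h1, List.getD_eq_getElem c (0,0) hj, hje]
  have hLg : L.getD j 0 = g ⟨j, hjk⟩ := by
    rw [hL, List.getD_eq_getElem _ 0 (by simpa using hjk), List.getElem_ofFn]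
  have hc1 : (List.map Prod.fst c).getD j 0 = er.1 := by
    rw [List.getD_eq_getElem _ 0 (by simpa using hj), List.getElem_map, hje]
  have h3 : E (σ ⟨j, hjk⟩) = er.1 := by
    show g ⟨j, hjk⟩ = er.1
    rw [← hLg, ← hcfst, hc1]
  rw [h3]
  simp only [Equiv.symm_apply_apply]
  rw [List.getD_eq_getElem _ _ (by simpa using hj), hje]
  exact hdvd

lemma patrol2y (k : ℕ) (a : Fin k → ℝ) (ha : ∀ i, 0 < a i)
    (y : ℝ) (hy : 0 < y) (hsum : ∑ i, y / a i = 1) :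
    ∃ S : Fin k → Set ℝ,
      (∀ i, ∀ t₁ ∈ S i, ∀ t₂ ∈ S i, t₁ ≠ t₂ → a i ≤ |t₁ - t₂|) ∧
      (∀ t : ℝ, ∃ i, ∃ t' ∈ Set.Ico t (t + 2 * y), t' ∈ S i) := by
  have h2y : 0 < 2 * y := by linarith
  have hay : ∀ i, y ≤ a i := by
    intro i
    have h1 : y / a i ≤ 1 := by
      rw [← hsum]
      exact Finset.single_le_sum (f := fun j => y / a j) (fun j _ => le_of_lt (div_pos hy (ha j))) (Finset.mem_univ i)
    have := (div_le_one (ha i)).1 h1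
    linarith
  have he : ∀ i, ∃ n : ℕ, a i ≤ 2^n * (2 * y) := by
    intro i
    obtain ⟨n, hn⟩ := pow_unbounded_of_one_lt (a i / (2 * y)) (by norm_num : (1:ℝ) < 2)
    exact ⟨n, by rw [div_lt_iff₀ h2y] at hn; linarith⟩
  set E : Fin k → ℕ := fun i => Nat.find (he i) with hE
  have hEspec : ∀ i, a i ≤ 2^(E i) * (2 * y) := fun i => Nat.find_spec (he i)
  have hwE : ∀ i, y / a i ≤ pw (E i) := by
    intro i
    rcases Nat.eq_zero_or_pos (E i) with h0 | hpos
    · rw [h0]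
      unfold pw
      simp only [pow_zero, inv_one]
      exact (div_le_one (ha i)).2 (hay i)
    · obtain ⟨n, hn⟩ : ∃ n, E i = n + 1 := ⟨E i - 1, by omega⟩
      have hmin : ¬ (a i ≤ 2^n * (2 * y)) := by
        have := Nat.find_min (he i) (by omega : n < E i)
        exact this
      push_neg at hmin
      have h1 : 2^(n+1) * y < a i := by
        rw [pow_succ] at *
        nlinarith
      unfold pw
      have hp : (0:ℝ) < 2^(n+1) := by positivity
      rw [hn, inv_eq_one_div, div_le_div_iff₀ (ha i) hp]
      nlinarith
  have hsum' : 1 ≤ ∑ i, pw (E i) := by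
    rw [← hsum]
    exact Finset.sum_le_sum (fun i _ => hwE i)
  obtain ⟨R, hR⟩ := fin_cover k E hsum'
  refine ⟨fun i => {x : ℝ | ∃ m : ℤ, ((2:ℤ)^(E i)) ∣ (m - R i) ∧ x = (2 * y) * m}, ?_, ?_⟩
  · rintro i t₁ ⟨m₁, hd₁, rfl⟩ t₂ ⟨m₂, hd₂, rfl⟩ hne
    have hmne : m₁ ≠ m₂ := by
      rintro rfl; exact hne rfl
    have hdvd : ((2:ℤ)^(E i)) ∣ (m₁ - m₂) := by
      have := dvd_sub hd₁ hd₂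
      simpa using this
    have habs : ((2:ℤ)^(E i)) ≤ |m₁ - m₂| := by
      apply Int.le_of_dvd (abs_pos.2 (sub_ne_zero.2 hmne)) ((dvd_abs _ _).2 hdvd)
    have habsr : ((2:ℝ)^(E i)) ≤ |(m₁:ℝ) - (m₂:ℝ)| := by
      have h := habs
      have : ((2:ℝ)^(E i)) ≤ ((|m₁ - m₂| : ℤ) : ℝ) := by exact_mod_cast h
      push_cast at this
      exact this
    calc a i ≤ 2^(E i) * (2 * y) := hEspec i
    _ ≤ |(m₁:ℝ) - (m₂:ℝ)| * (2 * y) := by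
        apply mul_le_mul_of_nonneg_right habsr h2y.le
    _ = |2 * y * (m₁:ℝ) - 2 * y * (m₂:ℝ)| := by
        rw [← mul_sub, abs_mul, abs_of_pos h2y]
        ring
  · intro t
    set m : ℤ := ⌈t / (2 * y)⌉ with hm
    obtain ⟨i, hi⟩ := hR m
    refine ⟨i, (2 * y) * m, ⟨?_, ?_⟩, ⟨m, hi, rfl⟩⟩
    · rw [← div_le_iff₀' h2y]
      exact Int.le_ceil _
    · have h1 : (m:ℝ) < t / (2 * y) + 1 := Int.ceil_lt_add_one _
      have := (mul_lt_mul_iff_right₀ h2y).2 h1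
      rw [mul_add, mul_one, mul_div_cancel₀ _ (ne_of_gt h2y)] at this
      linarith

lemma lower_bound (k : ℕ) (a : Fin k → ℝ) (ha : ∀ i, 0 < a i)
    (y : ℝ) (hy : 0 < y) (hsum : ∑ i, y / a i = 1)
    (T : ℝ) (hT : 0 < T)
    (S : Fin k → Set ℝ)
    (hsep : ∀ i, ∀ t₁ ∈ S i, ∀ t₂ ∈ S i, t₁ ≠ t₂ → a i ≤ |t₁ - t₂|)
    (hcov : ∀ t : ℝ, ∃ i, ∃ t' ∈ Set.Ico t (t + T), t' ∈ S i) : y ≤ T := by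
  by_contra hcon
  push_neg at hcon
  have hfrac : 0 < 1 - T / y := by
    rw [sub_pos, div_lt_one hy]
    exact hcon
  obtain ⟨M, hM⟩ := exists_nat_gt ((k : ℝ) / (1 - T / y))
  have hMk : (k : ℝ) < M * (1 - T / y) := by
    rw [div_lt_iff₀ hfrac] at hM
    exact hM
  have h := fun j : Fin M => hcov ((j : ℕ) * T)
  choose I p hp hpS using h
  have hp1 : ∀ j : Fin M, ((j:ℕ):ℝ) * T ≤ p j := fun j => (hp j).1
  have hp2 : ∀ j : Fin M, p j < ((j:ℕ):ℝ) * T + T := fun j => (hp j).2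
  have hpnn : ∀ j : Fin M, 0 ≤ p j := by
    intro j
    have : (0:ℝ) ≤ ((j:ℕ):ℝ) * T := by positivity
    linarith [hp1 j]
  have hpub : ∀ j : Fin M, p j < (M:ℝ) * T := by
    intro j
    have hj : ((j:ℕ):ℝ) + 1 ≤ (M:ℝ) := by exact_mod_cast j.isLt
    have := hp2 j
    nlinarith
  have hpne : ∀ j₁ j₂ : Fin M, j₁ ≠ j₂ → p j₁ ≠ p j₂ := by
    have key : ∀ j₁ j₂ : Fin M, (j₁:ℕ) < (j₂:ℕ) → p j₁ ≠ p j₂ := by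
      intro j₁ j₂ hlt heq
      have h12 : ((j₁:ℕ):ℝ) + 1 ≤ ((j₂:ℕ):ℝ) := by exact_mod_cast hlt
      have := hp2 j₁
      have := hp1 j₂
      nlinarith
    intro j₁ j₂ hne
    rcases lt_or_gt_of_ne (fun h : (j₁:ℕ) = (j₂:ℕ) => hne (Fin.ext h)) with h | h
    · exact key j₁ j₂ h
    · exact fun heq => key j₂ j₁ h heq.symm
  have key : ∀ i : Fin k,
      ((Finset.univ.filter (fun j : Fin M => I j = i)).card : ℝ) ≤ (M:ℝ) * T / a i + 1 := by
    intro i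
    have hai := ha i
    set B : ℤ := ⌊(M:ℝ) * T / a i⌋ with hB
    have hBnn : 0 ≤ B := Int.floor_nonneg.2 (by positivity)
    have hcard : (Finset.univ.filter (fun j : Fin M => I j = i)).card ≤ (Finset.Icc (0:ℤ) B).card := by
      apply Finset.card_le_card_of_injOn (fun j => ⌊p j / a i⌋)
      · intro j hj
        simp only [Finset.coe_Icc, Set.mem_Icc]
        constructor
        · exact Int.floor_nonneg.2 (div_nonneg (hpnn j) hai.le)
        · exact Int.floor_le_floor (by gcongr; exact (hpub j).le)
      · intro j₁ hj₁ j₂ hj₂ hfeq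
        by_contra hne
        have hI₁ : I j₁ = i := by simpa using hj₁
        have hI₂ : I j₂ = i := by simpa using hj₂
        have hpne12 := hpne j₁ j₂ hne
        have hsep' : a i ≤ |p j₁ - p j₂| := by
          apply hsep i (p j₁) ?_ (p j₂) ?_ hpne12
          · rw [← hI₁]; exact hpS j₁
          · rw [← hI₂]; exact hpS j₂
        -- from equal floors, |p j₁ - p j₂| < a i
        have e1 : p j₁ - p j₂ = (p j₁ / a i - p j₂ / a i) * a i := by field_simp
        simp only at hfeq
        have f1 := Int.floor_le (p j₁ / a i)
        have f2 := Int.lt_floor_add_one (p j₁ / a i)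
        have f3 := Int.floor_le (p j₂ / a i)
        have f4 := Int.lt_floor_add_one (p j₂ / a i)
        rw [hfeq] at f1 f2
        have hd : |p j₁ / a i - p j₂ / a i| < 1 := by
          rw [abs_sub_lt_iff]
          constructor <;> linarith
        have habs : |p j₁ - p j₂| < a i := by
          calc |p j₁ - p j₂| = |p j₁ / a i - p j₂ / a i| * a i := by
                rw [e1, abs_mul, abs_of_pos hai]
          _ < 1 * a i := mul_lt_mul_of_pos_right hd hai
          _ = a i := one_mul _
        linarith
    have hIcc : ((Finset.Icc (0:ℤ) B).card : ℝ) = (B:ℝ) + 1 := by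
      rw [Int.card_Icc, sub_zero]
      exact_mod_cast Int.toNat_of_nonneg (by omega : (0:ℤ) ≤ B + 1)
    calc ((Finset.univ.filter (fun j : Fin M => I j = i)).card : ℝ)
        ≤ ((Finset.Icc (0:ℤ) B).card : ℝ) := by exact_mod_cast hcard
    _ = (B:ℝ) + 1 := hIcc
    _ ≤ (M:ℝ) * T / a i + 1 := by
        have := Int.floor_le ((M:ℝ) * T / a i)
        linarith
  have htotal : (M:ℝ) ≤ (M:ℝ) * T / y + k := by
    have hcardeq : (Finset.univ : Finset (Fin M)).card
        = ∑ i : Fin k, (Finset.univ.filter (fun j : Fin M => I j = i)).card :=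
      Finset.card_eq_sum_card_fiberwise (fun j _ => Finset.mem_univ (I j))
    have h1 : (M:ℝ) = ∑ i : Fin k, ((Finset.univ.filter (fun j : Fin M => I j = i)).card : ℝ) := by
      rw [← Nat.cast_sum, ← hcardeq, Finset.card_univ, Fintype.card_fin]
    have h2 : ∑ i : Fin k, ((Finset.univ.filter (fun j : Fin M => I j = i)).card : ℝ)
        ≤ ∑ i : Fin k, ((M:ℝ) * T / a i + 1) :=
      Finset.sum_le_sum (fun i _ => key i)
    have h3 : ∑ i : Fin k, ((M:ℝ) * T / a i + 1) = (M:ℝ) * T / y + k := by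
      rw [Finset.sum_add_distrib]
      simp only [Finset.sum_const, Finset.card_univ, Fintype.card_fin, nsmul_eq_mul, mul_one]
      congr 1
      have : ∀ i : Fin k, (M:ℝ) * T / a i = ((M:ℝ) * T / y) * (y / a i) := by
        intro i
        field_simp
      rw [Finset.sum_congr rfl (fun i _ => this i), ← Finset.mul_sum, hsum, mul_one]
    linarith [h1, h2, h3]
  have hexp : (M:ℝ) * (1 - T/y) = M - M * T / y := by ring
  linarith


/-- Agents with minimum revisit intervals `a` patrol a point with idle time `T`. -/
def PatrolsPoint {k : ℕ} (a : Fin k → ℝ) (T : ℝ) : Prop :=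
  ∃ S : Fin k → Set ℝ,
    (∀ i, ∀ t₁ ∈ S i, ∀ t₂ ∈ S i, t₁ ≠ t₂ → a i ≤ |t₁ - t₂|) ∧
    (∀ t : ℝ, ∃ i, ∃ t' ∈ Set.Ico t (t + T), t' ∈ S i)

/-- if `x` is the infimum of achievable idle times and `y` satisfies
`∑ y / a i = 1`, then `y ≤ x` and idle time `2y` is achievable. -/
theorem stmt_11 (k : ℕ) (a : Fin k → ℝ) (ha : ∀ i, 0 < a i)
    (y : ℝ) (hy : 0 < y) (hsum : ∑ i, y / a i = 1) :
    y ≤ sInf {T : ℝ | 0 < T ∧ PatrolsPoint a T} ∧ PatrolsPoint a (2 * y) := by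
  have hpat : PatrolsPoint a (2 * y) := patrol2y k a ha y hy hsum
  refine ⟨?_, hpat⟩
  apply le_csInf ⟨2 * y, Set.mem_setOf.2 ⟨by linarith, hpat⟩⟩
  rintro T ⟨hT, S, hsep, hcov⟩
  exact lower_bound k a ha y hy hsum T hT S hsep hcov
end

section
/- If there exists a (c, k)-sequence, then k agents with speed limits 1, 1/2, ..., 1/k can patrol a circle of perimeter c/2 unidirectionally (moving only clockwise) with idle time 1. -/
/-- `S` is a `(c, k)`-sequence: the sets cover `ℝ`, and each `S i` (agent `i+1`)
is a union of non-overlapping closed intervals of length at most `1/(c(i+1) − 1)`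
with gaps of exactly 1 between consecutive intervals. -/
def IsCKSeq (c : ℝ) (k : ℕ) (S : Fin k → Set ℝ) : Prop :=
  (⋃ i, S i) = Set.univ ∧
  ∀ i : Fin k, ∃ a b : ℤ → ℝ,
    S i = (⋃ j : ℤ, Set.Icc (a j) (b j)) ∧
    (∀ j, a j ≤ b j) ∧
    (∀ j, b j - a j ≤ 1 / (c * ((i : ℕ) + 1) - 1)) ∧
    (∀ j, a (j + 1) - b j = 1)

/-- `k` agents, agent `i` with speed limit `v i`, patrol a circle of perimeter `P`
unidirectionally (clockwise only) with idle time 1; `f i` is the lift of the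
motion of agent `i` to `ℝ`. -/
def PatrolsCircle {k : ℕ} (v : Fin k → ℝ) (P : ℝ) : Prop :=
  ∃ f : Fin k → ℝ → ℝ,
    (∀ i, Monotone (f i)) ∧
    (∀ i, ∀ s t : ℝ, s ≤ t → f i t - f i s ≤ v i * (t - s)) ∧
    (∀ x t : ℝ, ∃ i, ∃ t' ∈ Set.Ico t (t + 1), ∃ m : ℤ, f i t' = x + m * P)

/-- The candidate trajectory pieces. -/
noncomputable def gfun (c I : ℝ) (a : ℤ → ℝ) (j : ℤ) (t : ℝ) : ℝ :=
  c / 2 * (a j - j) + max (t - a j / 2) 0 / I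

section Aux

variable {c I : ℝ} {a b : ℤ → ℝ}

lemma A_mono (hab : ∀ j, a j ≤ b j) (hgap : ∀ j, a (j + 1) = b j + 1)
    {j j' : ℤ} (h : j ≤ j') : a j - (j : ℝ) ≤ a j' - (j' : ℝ) := by
  have key : ∀ n : ℕ, a j - (j : ℝ) ≤ a (j + n) - ((j + n : ℤ) : ℝ) := by
    intro n
    induction n with
    | zero => simp
    | succ n ih =>
      have h1 := hgap (j + n)
      have h2 := hab (j + n)
      have e : (j + ((n : ℕ) + 1 : ℕ) : ℤ) = (j + (n : ℕ)) + 1 := by push_cast; ring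
      rw [e, h1]
      push_cast
      push_cast at ih
      linarith
  have h3 := key (j' - j).toNat
  rwa [show j + (((j' - j).toNat : ℕ) : ℤ) = j' by omega] at h3

lemma a_mono (hab : ∀ j, a j ≤ b j) (hgap : ∀ j, a (j + 1) = b j + 1)
    {j j' : ℤ} (h : j ≤ j') : a j ≤ a j' := by
  have h1 := A_mono hab hgap h
  have h2 : (j : ℝ) ≤ (j' : ℝ) := by exact_mod_cast h
  linarith

lemma chain_step (hI : 1 ≤ I) (hcI : 1 < c * I) (hab : ∀ j, a j ≤ b j)
    (hlen : ∀ j, (b j - a j) * (c * I - 1) ≤ 1) (hgap : ∀ j, a (j + 1) = b j + 1)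
    (j : ℤ) (t : ℝ) (h : a (j + 1) ≤ 2 * t) :
    gfun c I a (j + 1) t ≤ gfun c I a j t := by
  have hI0 : (0:ℝ) < I := lt_of_lt_of_le one_pos hI
  have h1 : a j ≤ a (j + 1) := by
    have := hgap j; have := hab j; linarith
  have hmax1 : max (t - a (j + 1) / 2) 0 = t - a (j + 1) / 2 :=
    max_eq_left (by linarith)
  have hmax2 : max (t - a j / 2) 0 = t - a j / 2 := max_eq_left (by linarith)
  have key : gfun c I a j t - gfun c I a (j + 1) t
      = (1 - (b j - a j) * (c * I - 1)) / (2 * I) := by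
    unfold gfun
    rw [hmax1, hmax2, hgap j]
    push_cast
    field_simp
    ring
  have h2 : (0:ℝ) ≤ 1 - (b j - a j) * (c * I - 1) := by linarith [hlen j]
  have h3 : (0:ℝ) ≤ (1 - (b j - a j) * (c * I - 1)) / (2 * I) :=
    div_nonneg h2 (by positivity)
  linarith [key ▸ h3]

lemma lb (hI : 1 ≤ I) (hcI : 1 < c * I) (hab : ∀ j, a j ≤ b j)
    (hlen : ∀ j, (b j - a j) * (c * I - 1) ≤ 1) (hgap : ∀ j, a (j + 1) = b j + 1)
    (t : ℝ) (J : ℤ) (hJ : a J ≤ 2 * t) (j : ℤ) :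
    min (gfun c I a J t) (c / 2 * (a (J + 1) - ((J + 1 : ℤ) : ℝ))) ≤ gfun c I a j t := by
  have hI0 : (0:ℝ) < I := lt_of_lt_of_le one_pos hI
  have hc0 : (0:ℝ) < c := by nlinarith
  rcases le_or_gt j J with hj | hj
  · refine le_trans (min_le_left _ _) ?_
    have down : ∀ n : ℕ, gfun c I a J t ≤ gfun c I a (J - n) t := by
      intro n
      induction n with
      | zero => simp
      | succ n ih =>
        have h1 : a (J - n) ≤ 2 * t :=
          le_trans (a_mono hab hgap (by omega)) hJ
        have h2 : (J - (n + 1 : ℕ) : ℤ) + 1 = J - n := by push_cast; ring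
        have h3 := chain_step hI hcI hab hlen hgap (J - (n + 1 : ℕ)) t (by rw [h2]; exact h1)
        rw [h2] at h3
        exact ih.trans h3
    have h4 := down (J - j).toNat
    rwa [show (J - ((J - j).toNat : ℤ)) = j by omega] at h4
  · refine le_trans (min_le_right _ _) ?_
    have h1 : c / 2 * (a (J + 1) - ((J + 1 : ℤ) : ℝ)) ≤ c / 2 * (a j - (j : ℝ)) :=
      mul_le_mul_of_nonneg_left (A_mono hab hgap (by omega)) (by positivity)
    have h2 : (0:ℝ) ≤ max (t - a j / 2) 0 / I := div_nonneg (le_max_right _ _) hI0.le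
    unfold gfun
    linarith

lemma hJex (hab : ∀ j, a j ≤ b j) (hgap : ∀ j, a (j + 1) = b j + 1) (t : ℝ) :
    ∃ J : ℤ, a J ≤ 2 * t := by
  refine ⟨min 0 ⌊2 * t - a 0⌋, ?_⟩
  have h1 : (min 0 ⌊2 * t - a 0⌋ : ℤ) ≤ 0 := min_le_left _ _
  have h2 := A_mono hab hgap h1
  have h3 : ((min 0 ⌊2 * t - a 0⌋ : ℤ) : ℝ) ≤ (⌊2 * t - a 0⌋ : ℝ) := by
    exact_mod_cast min_le_right (0:ℤ) ⌊2 * t - a 0⌋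
  have h4 : ((⌊2 * t - a 0⌋ : ℤ) : ℝ) ≤ 2 * t - a 0 := Int.floor_le _
  push_cast at h2 h3
  linarith

lemma hbdd (hI : 1 ≤ I) (hcI : 1 < c * I) (hab : ∀ j, a j ≤ b j)
    (hlen : ∀ j, (b j - a j) * (c * I - 1) ≤ 1) (hgap : ∀ j, a (j + 1) = b j + 1)
    (t : ℝ) : BddBelow (Set.range fun j : ℤ => gfun c I a j t) := by
  obtain ⟨J, hJ⟩ := hJex hab hgap t
  exact ⟨_, by rintro _ ⟨j, rfl⟩; exact lb hI hcI hab hlen hgap t J hJ j⟩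

lemma traj_visit (hI : 1 ≤ I) (hcI : 1 < c * I) (hab : ∀ j, a j ≤ b j)
    (hlen : ∀ j, (b j - a j) * (c * I - 1) ≤ 1) (hgap : ∀ j, a (j + 1) = b j + 1)
    (u : ℝ) (J : ℤ) (h1 : a J ≤ u) (h2 : u ≤ b J) :
    (⨅ j : ℤ, gfun c I a j (a J / 2 + I * c / 2 * (u - a J))) = c / 2 * (u - J) := by
  have hI0 : (0:ℝ) < I := lt_of_lt_of_le one_pos hI
  have hc0 : (0:ℝ) < c := by nlinarith
  set t' : ℝ := a J / 2 + I * c / 2 * (u - a J) with ht'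
  have hnn : (0:ℝ) ≤ I * c / 2 * (u - a J) := by
    apply mul_nonneg (by positivity) (by linarith)
  have hmax : max (t' - a J / 2) 0 = t' - a J / 2 := max_eq_left (by rw [ht']; linarith)
  have hgJ : gfun c I a J t' = c / 2 * (u - J) := by
    unfold gfun
    rw [hmax, ht']
    field_simp
    ring
  have hle : ∀ j, gfun c I a J t' ≤ gfun c I a j t' := by
    intro j
    have hJ2 : a J ≤ 2 * t' := by rw [ht']; linarith
    have h3 := lb hI hcI hab hlen hgap t' J hJ2 j
    have hmin : min (gfun c I a J t') (c / 2 * (a (J + 1) - ((J + 1 : ℤ) : ℝ)))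
        = gfun c I a J t' := by
      apply min_eq_left
      rw [hgJ, hgap J]
      push_cast
      have : u - (J : ℝ) ≤ b J + 1 - ((J : ℝ) + 1) := by linarith
      nlinarith
    rwa [hmin] at h3
  refine le_antisymm ?_ ?_
  · exact le_trans (ciInf_le ⟨_, by rintro _ ⟨j, rfl⟩; exact hle j⟩ J) (le_of_eq hgJ)
  · rw [← hgJ]; exact le_ciInf hle

end Aux

/-- if a `(c, k)`-sequence exists, then `k` agents with speed
limits `1, 1/2, …, 1/k` can patrol a circle of perimeter `c/2` unidirectionally. -/
theorem stmt_16 (c : ℝ) (hc : 1 < c) (k : ℕ)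
    (h : ∃ S : Fin k → Set ℝ, IsCKSeq c k S) :
    PatrolsCircle (fun i : Fin k => 1 / ((i : ℕ) + 1) : Fin k → ℝ) (c / 2) := by
  obtain ⟨S, hScov, hmem⟩ := h
  choose a b hSeq hab hlen hgap using hmem
  have hc0 : (0:ℝ) < c := lt_trans one_pos hc
  have hgap' : ∀ i j, a i (j + 1) = b i j + 1 := fun i j => by linarith [hgap i j]
  have hI : ∀ i : Fin k, (1:ℝ) ≤ ((i : ℕ) : ℝ) + 1 := by
    intro i
    have : (0:ℝ) ≤ ((i : ℕ) : ℝ) := Nat.cast_nonneg _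
    linarith
  have hcI : ∀ i : Fin k, 1 < c * (((i : ℕ) : ℝ) + 1) := by
    intro i
    have := hI i
    nlinarith
  have hlen' : ∀ (i : Fin k) (j : ℤ),
      (b i j - a i j) * (c * (((i : ℕ) : ℝ) + 1) - 1) ≤ 1 := by
    intro i j
    have h1 : (0:ℝ) < c * (((i : ℕ) : ℝ) + 1) - 1 := by linarith [hcI i]
    have h2 := hlen i j
    calc (b i j - a i j) * (c * (((i : ℕ) : ℝ) + 1) - 1)
        ≤ 1 / (c * (((i : ℕ) : ℝ) + 1) - 1) * (c * (((i : ℕ) : ℝ) + 1) - 1) :=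
          mul_le_mul_of_nonneg_right h2 h1.le
      _ = 1 := by field_simp
  refine ⟨fun i t => ⨅ j : ℤ, gfun c (((i : ℕ) : ℝ) + 1) (a i) j t, ?_, ?_, ?_⟩
  · -- monotone
    intro i s t hst
    have hI0 : (0:ℝ) < ((i : ℕ) : ℝ) + 1 := lt_of_lt_of_le one_pos (hI i)
    refine le_ciInf fun j => ?_
    refine le_trans (ciInf_le (hbdd (hI i) (hcI i) (hab i) (hlen' i) (hgap' i) s) j) ?_
    unfold gfun
    have h1 : max (s - a i j / 2) 0 ≤ max (t - a i j / 2) 0 :=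
      max_le_max (by linarith) le_rfl
    have h2 := (div_le_div_iff_of_pos_right hI0).2 h1
    linarith
  · -- speed
    intro i s t hst
    have hI0 : (0:ℝ) < ((i : ℕ) : ℝ) + 1 := lt_of_lt_of_le one_pos (hI i)
    set I : ℝ := ((i : ℕ) : ℝ) + 1 with hIdef
    have key : ∀ j : ℤ, (⨅ j : ℤ, gfun c I (a i) j t)
        ≤ gfun c I (a i) j s + 1 / I * (t - s) := by
      intro j
      refine le_trans (ciInf_le (hbdd (hI i) (hcI i) (hab i) (hlen' i) (hgap' i) t) j) ?_
      unfold gfun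
      have h1 : max (t - a i j / 2) 0 ≤ max (s - a i j / 2) 0 + (t - s) := by
        refine max_le ?_ ?_
        · have := le_max_left (s - a i j / 2) 0; linarith
        · have := le_max_right (s - a i j / 2) 0; linarith
      have h2 := (div_le_div_iff_of_pos_right hI0).2 h1
      rw [add_div] at h2
      have e : 1 / I * (t - s) = (t - s) / I := by ring
      linarith
    have h3 : (⨅ j : ℤ, gfun c I (a i) j t) - 1 / I * (t - s)
        ≤ ⨅ j : ℤ, gfun c I (a i) j s :=
      le_ciInf fun j => by linarith [key j]
    linarith
  · -- coverage
    intro x t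
    obtain ⟨n, hn⟩ : ∃ n : ℤ, n = ⌈2 * t - 2 * x / c⌉ := ⟨_, rfl⟩
    have hn1 : 2 * t - 2 * x / c ≤ (n : ℝ) := hn ▸ Int.le_ceil _
    have hn2 : (n : ℝ) < 2 * t - 2 * x / c + 1 := hn ▸ Int.ceil_lt_add_one _
    obtain ⟨u, hu⟩ : ∃ u : ℝ, u = 2 * x / c + n := ⟨_, rfl⟩
    have hu1 : 2 * t ≤ u := by rw [hu]; linarith
    have hu2 : u < 2 * t + 1 := by rw [hu]; linarith
    have hmemu : u ∈ ⋃ i, S i := hScov ▸ Set.mem_univ u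
    rw [Set.mem_iUnion] at hmemu
    obtain ⟨i, hiu⟩ := hmemu
    rw [hSeq i, Set.mem_iUnion] at hiu
    obtain ⟨j, hju⟩ := hiu
    rw [Set.mem_Icc] at hju
    obtain ⟨hju1, hju2⟩ := hju
    have hI0 : (0:ℝ) < ((i : ℕ) : ℝ) + 1 := lt_of_lt_of_le one_pos (hI i)
    obtain ⟨t', ht'⟩ : ∃ t' : ℝ,
        t' = a i j / 2 + (((i : ℕ) : ℝ) + 1) * c / 2 * (u - a i j) := ⟨_, rfl⟩
    have hcI1 : (0:ℝ) < c * (((i : ℕ) : ℝ) + 1) - 1 := by linarith [hcI i]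
    have hnn : (0:ℝ) ≤ u - a i j := by linarith
    have ht'u : t' - u / 2 = (u - a i j) * (c * (((i : ℕ) : ℝ) + 1) - 1) / 2 := by
      rw [ht']; ring
    have ht'lb : u / 2 ≤ t' := by
      have h4 : (0:ℝ) ≤ (u - a i j) * (c * (((i : ℕ) : ℝ) + 1) - 1) :=
        mul_nonneg hnn hcI1.le
      linarith
    have ht'ub : t' ≤ u / 2 + 1 / 2 := by
      have h5 : (u - a i j) * (c * (((i : ℕ) : ℝ) + 1) - 1)
          ≤ (b i j - a i j) * (c * (((i : ℕ) : ℝ) + 1) - 1) :=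
        mul_le_mul_of_nonneg_right (by linarith) hcI1.le
      have h6 := hlen' i j
      linarith
    refine ⟨i, t', ⟨by linarith, by linarith⟩, n - j, ?_⟩
    have hv := traj_visit (hI i) (hcI i) (hab i) (hlen' i) (hgap' i) u j hju1 hju2
    rw [← ht'] at hv
    show (⨅ j' : ℤ, gfun c (((i : ℕ) : ℝ) + 1) (a i) j' t') = x + ((n - j : ℤ) : ℝ) * (c / 2)
    rw [hv, hu]
    push_cast
    field_simp
    ring
end

section
/- If k agents with speed limits 1, 1/2, ..., 1/k can patrol a circle of perimeter c (c > 1) unidirectionally with idle time 1, then there exists a (c, k)-sequence. -/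
/-- if `k` agents with speed limits `1, 1/2, …, 1/k` can patrol a
circle of perimeter `c > 1` unidirectionally, then a `(c, k)`-sequence exists. -/
theorem stmt_17 (c : ℝ) (hc : 1 < c) (k : ℕ)
    (h : PatrolsCircle (fun i : Fin k => 1 / ((i : ℕ) + 1) : Fin k → ℝ) c) :
    ∃ S : Fin k → Set ℝ, IsCKSeq c k S := by
  obtain ⟨f, hmono, hspeed, hcover⟩ := h
  have hKpos : ∀ i : Fin k, (0:ℝ) < ((i:ℕ):ℝ) + 1 := fun i => by positivity
  have hv1 : ∀ i : Fin k, (1:ℝ) / (((i:ℕ):ℝ) + 1) ≤ 1 := by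
    intro i
    rw [div_le_one (hKpos i)]
    have : (0:ℝ) ≤ ((i:ℕ):ℝ) := Nat.cast_nonneg _
    linarith
  have hspeed' : ∀ (i : Fin k) (s t : ℝ), s ≤ t →
      f i t - f i s ≤ (1 / (((i:ℕ):ℝ) + 1)) * (t - s) := fun i s t hst => hspeed i s t hst
  -- `G i : u ↦ f i u - c * u` is strictly decreasing
  have hGanti : ∀ i : Fin k, StrictAnti (fun u : ℝ => f i u - c * u) := by
    intro i s t hst
    simp only
    have h1 := hspeed' i s t hst.le
    have h2 := mul_le_mul_of_nonneg_right (hv1 i) (by linarith : (0:ℝ) ≤ t - s)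
    nlinarith [hst]
  -- each `f i` and hence each `G i` is continuous
  have hFcont : ∀ i : Fin k, Continuous (f i) := by
    intro i
    have : LipschitzWith 1 (f i) := by
      apply LipschitzWith.of_dist_le_mul
      intro s t
      rw [NNReal.coe_one, one_mul, Real.dist_eq, Real.dist_eq]
      rcases le_total s t with hst | hst
      · have h1 := hspeed' i s t hst
        have h2 := hmono i hst
        have h3 := mul_le_mul_of_nonneg_right (hv1 i) (by linarith : (0:ℝ) ≤ t - s)
        rw [abs_sub_comm, abs_of_nonneg (by linarith : (0:ℝ) ≤ f i t - f i s),
          abs_sub_comm s t, abs_of_nonneg (by linarith : (0:ℝ) ≤ t - s)]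
        linarith
      · have h1 := hspeed' i t s hst
        have h2 := hmono i hst
        have h3 := mul_le_mul_of_nonneg_right (hv1 i) (by linarith : (0:ℝ) ≤ s - t)
        rw [abs_of_nonneg (by linarith : (0:ℝ) ≤ f i s - f i t),
          abs_of_nonneg (by linarith : (0:ℝ) ≤ s - t)]
        linarith
    exact this.continuous
  have hGcont : ∀ i : Fin k, Continuous (fun u : ℝ => f i u - c * u) :=
    fun i => (hFcont i).sub (continuous_const.mul continuous_id)
  -- `G i` attains every value `c * m`
  have hex : ∀ (i : Fin k) (m : ℤ), ∃ u : ℝ, f i u - c * u = c * m := by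
    intro i m
    set T : ℝ := |f i 0 - c * m| / (c - 1) with hT
    have hc1 : (0:ℝ) < c - 1 := by linarith
    have hT0 : 0 ≤ T := div_nonneg (abs_nonneg _) hc1.le
    have hTe : (c - 1) * T = |f i 0 - c * m| := by
      rw [hT, mul_div_cancel₀ _ (ne_of_gt hc1)]
    have h1 : f i T - c * T ≤ c * m := by
      have hs := hspeed' i 0 T hT0
      rw [sub_zero] at hs
      have h2 := mul_le_mul_of_nonneg_right (hv1 i) hT0
      have h3 := le_abs_self (f i 0 - c * m)
      linarith
    have h2 : c * m ≤ f i (-T) - c * (-T) := by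
      have hs := hspeed' i (-T) 0 (by linarith)
      have hz : (0:ℝ) - (-T) = T := by ring
      rw [hz] at hs
      have h2' := mul_le_mul_of_nonneg_right (hv1 i) hT0
      have h3 := le_abs_self (c * m - f i 0)
      have h4 : |f i 0 - c * m| = |c * m - f i 0| := abs_sub_comm _ _
      linarith
    have hmem : c * (m:ℝ) ∈ Set.Icc (f i T - c * T) (f i (-T) - c * (-T)) :=
      Set.mem_Icc.2 ⟨h1, h2⟩
    obtain ⟨u, _, hu⟩ := intermediate_value_Icc' (by linarith : -T ≤ T)
      ((hGcont i).continuousOn) hmem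
    exact ⟨u, hu⟩
  choose q hq using hex
  -- spacing facts: consecutive roots are between 1 and 1 + 1/(c(i+1)-1) apart
  have hd : ∀ (i : Fin k) (m : ℤ), 1 ≤ q i (m - 1) - q i m ∧
      q i (m - 1) - q i m - 1 ≤ 1 / (c * (((i:ℕ):ℝ) + 1) - 1) := by
    intro i m
    set K : ℝ := ((i:ℕ):ℝ) + 1 with hK
    have hKp : 0 < K := hKpos i
    have hKne : K ≠ 0 := ne_of_gt hKp
    have hK1 : 1 ≤ K := by
      have : (0:ℝ) ≤ ((i:ℕ):ℝ) := Nat.cast_nonneg _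
      linarith
    have hcK : 0 < c * K - 1 := by nlinarith
    set x := q i m with hx
    set y := q i (m - 1) with hy
    have e1 : f i x - c * x = c * m := hq i m
    have e2 : f i y - c * y = c * ((m:ℝ) - 1) := by
      have := hq i (m - 1)
      push_cast at this
      exact this
    have hlt : x < y := by
      have hGlt : (fun u : ℝ => f i u - c * u) y < (fun u : ℝ => f i u - c * u) x := by
        simp only
        rw [e1, e2]
        nlinarith
      exact ((hGanti i).lt_iff_gt).1 hGlt
    have hFm : f i x ≤ f i y := hmono i hlt.le
    have hFs : f i y - f i x ≤ (1 / K) * (y - x) := hspeed' i x y hlt.le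
    have he' : f i y - f i x = c * y - c * x - c := by
      have h12 : (f i x - c * x) - (f i y - c * y) = c := by rw [e1, e2]; ring
      linarith
    constructor
    · nlinarith
    · rw [le_div_iff₀ hcK]
      have hFs' : K * (f i y - f i x) ≤ y - x := by
        have h5 := mul_le_mul_of_nonneg_left hFs hKp.le
        rw [← mul_assoc, mul_one_div_cancel hKne, one_mul] at h5
        exact h5
      rw [he'] at hFs'
      nlinarith
  refine ⟨fun i => ⋃ j : ℤ, Set.Icc (q i (-j)) (q i (-j - 1) - 1), ?_, ?_⟩
  · -- the union is all of ℝ: cover the point `c * x` during the window `[x, x+1)`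
    apply Set.eq_univ_of_forall
    intro x
    obtain ⟨i, t', ht', m, hm⟩ := hcover (c * x) x
    refine Set.mem_iUnion.2 ⟨i, Set.mem_iUnion.2 ⟨-m, ?_⟩⟩
    rw [neg_neg]
    refine Set.mem_Icc.2 ⟨?_, ?_⟩
    · have h1 : (fun u : ℝ => f i u - c * u) x ≤ (fun u : ℝ => f i u - c * u) (q i m) := by
        simp only
        rw [hq i m]
        have h2 := hmono i ht'.1
        linarith [hm.le, hm.ge]
      exact ((hGanti i).le_iff_ge).1 h1
    · have h2 : (fun u : ℝ => f i u - c * u) (q i (m - 1)) ≤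
          (fun u : ℝ => f i u - c * u) (x + 1) := by
        simp only
        have hqm : f i (q i (m - 1)) - c * q i (m - 1) = c * ((m:ℝ) - 1) := by
          have := hq i (m - 1); push_cast at this; exact this
        have hmt : f i t' ≤ f i (x + 1) := hmono i ht'.2.le
        rw [hqm]
        linarith [hm.le, hm.ge]
      have h3 := ((hGanti i).le_iff_ge).1 h2
      linarith
  · -- structure of each S i
    intro i
    refine ⟨fun j => q i (-j), fun j => q i (-j - 1) - 1, rfl, ?_, ?_, ?_⟩
    · intro j
      have := (hd i (-j)).1
      simp only
      linarith
    · intro j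
      have := (hd i (-j)).2
      simp only
      linarith
    · intro j
      show q i (-(j + 1)) - (q i (-j - 1) - 1) = 1
      have hind : -(j + 1) = -j - 1 := by ring
      rw [hind]
      ring
end

section
/- The runners strategy works: given speeds v_1 ≥ v_2 ≥ ... ≥ v_k > 0 and any r with 1 ≤ r ≤ k, placing the r fastest agents equidistantly on a circle of perimeter r·v_r and having them all move clockwise at constant speed v_r yields a schedule patrolling the circle with idle time 1. Hence a circle of perimeter max_r r·v_r can be patrolled. -/
/-- the runners strategy: for speeds `v 1 ≥ v 2 ≥ ⋯ ≥ v k > 0` and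
any `r`, the agents can patrol a circle of perimeter `(r+1)·v r` (the `r+1`
fastest agents running equidistantly at speed `v r`), with idle time 1. -/
theorem stmt_18 (k : ℕ) (v : Fin k → ℝ) (hv : ∀ i, 0 < v i)
    (hsorted : ∀ i j : Fin k, i ≤ j → v j ≤ v i) (r : Fin k) :
    PatrolsCircle v ((((r : ℕ) + 1) : ℝ) * v r) := by
  have hvr : 0 < v r := hv r
  refine ⟨fun i t => if (i : ℕ) ≤ (r : ℕ) then v r * t + (i : ℕ) * v r else 0,
    ?_, ?_, ?_⟩
  · intro i
    intro s t hst
    by_cases h : (i : ℕ) ≤ (r : ℕ)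
    · simp only [h, if_true]
      have := mul_le_mul_of_nonneg_left hst hvr.le
      linarith
    · simp [h]
  · intro i s t hst
    by_cases h : (i : ℕ) ≤ (r : ℕ)
    · simp only [h, if_true]
      have hle : v r ≤ v i := hsorted i r h
      have ht : 0 ≤ t - s := by linarith
      have : v r * (t - s) ≤ v i * (t - s) := mul_le_mul_of_nonneg_right hle ht
      nlinarith
    · simp only [h, if_false]
      have : 0 ≤ v i * (t - s) := mul_nonneg (hv i).le (by linarith)
      linarith
  · intro x t
    set y : ℝ := x / v r with hy
    set z : ℤ := ⌊y - t⌋ with hz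
    have hR : (0 : ℤ) < (r : ℕ) + 1 := by positivity
    set q : ℤ := z / ((r : ℕ) + 1) with hq
    set a : ℤ := z % ((r : ℕ) + 1) with ha
    have ha0 : 0 ≤ a := Int.emod_nonneg z (by omega)
    have ha1 : a < (r : ℕ) + 1 := Int.emod_lt_of_pos z hR
    have hak : a.toNat < k := by
      have : (r : ℕ) < k := r.isLt
      omega
    refine ⟨⟨a.toNat, hak⟩, y - z, ?_, -q, ?_⟩
    · have h1 : (z : ℝ) ≤ y - t := Int.floor_le _
      have h2 : (y - t : ℝ) - 1 < z := Int.sub_one_lt_floor (y - t)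
      constructor <;> [linarith; linarith]
    · have hi : ((⟨a.toNat, hak⟩ : Fin k) : ℕ) ≤ (r : ℕ) := by
        show a.toNat ≤ (r : ℕ); omega
      simp only [hi, if_true]
      have hdiv : ((r : ℕ) + 1) * q + a = z := Int.mul_ediv_add_emod z _
      have hvy : v r * y = x := by rw [hy]; field_simp [hvr.ne']
      have haR : ((a.toNat : ℕ) : ℝ) = (a : ℝ) := by
        have := Int.toNat_of_nonneg ha0
        exact_mod_cast congrArg (fun n : ℤ => (n : ℝ)) this
      show v r * (y - z) + ((a.toNat : ℕ) : ℝ) * v r = _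
      rw [haR]
      have hzR : (z : ℝ) = ((r : ℕ) + 1) * q + a := by exact_mod_cast hdiv.symm
      rw [hzR]
      push_cast
      nlinarith [hvy]
end
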